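/- arXiv:2509.16448 — 12 statements merged into one kernel-verified Lean document; each statement's English description precedes it below -/
import Mathlib

section
/- For every integer n ≥ 2, the domination number of the 2-token graph of the star graph satisfies γ(F_2(S_n)) = n − 1. -/
/-- The `k`-token graph of a simple graph `G`: vertices are the `k`-element
subsets of `V(G)`, and two subsets are adjacent when their symmetric difference
is a pair `{u, v}` of adjacent vertices of `G`. -/
def tokenGraph {V : Type*} [DecidableEq V] (G : SimpleGraph V) (k : ℕ) :
    SimpleGraph {A : Finset V // A.card = k} where
  Adj A B := ∃ u v : V, G.Adj u v ∧ symmDiff A.1 B.1 = {u, v}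
  symm := by
    constructor
    rintro A B ⟨u, v, huv, h⟩
    exact ⟨u, v, huv, by rwa [symmDiff_comm]⟩
  loopless := by
    constructor
    rintro A ⟨u, v, huv, h⟩
    rw [symmDiff_self] at h
    have : u ∈ (⊥ : Finset V) := h ▸ Finset.mem_insert_self u {v}
    simp at this

/-- A dominating set: every vertex is in `D` or adjacent to a vertex of `D`. -/
def IsDominatingSet {V : Type*} (G : SimpleGraph V) (D : Set V) : Prop :=
  ∀ v : V, v ∈ D ∨ ∃ u ∈ D, G.Adj u v

/-- The domination number: minimum cardinality of a dominating set. -/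
noncomputable def dominationNumber {V : Type*} [Fintype V] (G : SimpleGraph V) : ℕ :=
  sInf {m : ℕ | ∃ D : Finset V, IsDominatingSet G ↑D ∧ D.card = m}

/-- The star graph `S n` with vertex set `{0, 1, …, n}`, center `0` adjacent to
each leaf `1, …, n`. -/
def starGraph (n : ℕ) : SimpleGraph (Fin (n + 1)) where
  Adj u v := u ≠ v ∧ (u = 0 ∨ v = 0)
  symm := by constructor; rintro u v ⟨h1, h2⟩; exact ⟨h1.symm, h2.symm⟩
  loopless := by constructor; rintro u ⟨h1, _⟩; exact h1 rfl

namespace TokenStarAux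

lemma fin_mk_ne {m a b : ℕ} (ha : a < m) (hb : b < m) (hab : a ≠ b) :
    (⟨a, ha⟩ : Fin m) ≠ ⟨b, hb⟩ := fun h => hab (congrArg Fin.val h)

lemma symmDiff_pair {α : Type*} [DecidableEq α] {x y z : α} (hxy : x ≠ y) (hzy : z ≠ y)
    (hxz : x ≠ z) : symmDiff ({x, y} : Finset α) {z, y} = {x, z} := by
  ext w
  simp only [Finset.mem_symmDiff, Finset.mem_insert, Finset.mem_singleton]
  constructor
  · rintro (⟨h1 | h1, h2⟩ | ⟨h1 | h1, h2⟩)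
    · exact Or.inl h1
    · exact absurd (Or.inr h1) h2
    · exact Or.inr h1
    · exact absurd (Or.inr h1) h2
  · rintro (rfl | rfl)
    · exact Or.inl ⟨Or.inl rfl, by rintro (rfl | rfl); exacts [hxz rfl, hxy rfl]⟩
    · exact Or.inr ⟨Or.inl rfl, by rintro (rfl | rfl); exacts [hxz rfl, hzy rfl]⟩

/-- Extract the form `{0, c}` from a 2-set containing 0. -/
lemma eq_pair_zero {n : ℕ} {A : Finset (Fin (n+1))} (h2 : A.card = 2)
    (h0 : (0 : Fin (n+1)) ∈ A) : ∃ c, c ≠ 0 ∧ A = {0, c} := by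
  obtain ⟨a, b, hab, hA⟩ := Finset.card_eq_two.mp h2
  rw [hA] at h0
  rcases Finset.mem_insert.mp h0 with rfl | h
  · exact ⟨b, fun hb => hab hb.symm, hA⟩
  · rcases Finset.mem_singleton.mp h with rfl
    exact ⟨a, hab, by rw [hA, Finset.pair_comm]⟩

/-- The neighbors of a 2-set not containing 0 are exactly the sets `{0, i}` with `i`
in the set. -/
lemma adj_struct {n : ℕ} {A B : {A : Finset (Fin (n+1)) // A.card = 2}}
    (h : (tokenGraph (starGraph n) 2).Adj A B) (h0 : (0 : Fin (n+1)) ∉ B.1) :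
    ∃ i ∈ B.1, A.1 = {0, i} := by
  obtain ⟨u, v, ⟨huv, h00⟩, hsd⟩ := h
  obtain ⟨w, hw0, hsd⟩ : ∃ w, w ≠ 0 ∧ symmDiff A.1 B.1 = {0, w} := by
    rcases h00 with rfl | rfl
    · exact ⟨v, fun hv => huv hv.symm, hsd⟩
    · exact ⟨u, huv, by rwa [Finset.pair_comm] at hsd⟩
  have h0A : (0 : Fin (n+1)) ∈ A.1 := by
    have h0sd : (0 : Fin (n+1)) ∈ symmDiff A.1 B.1 := by
      rw [hsd]; exact Finset.mem_insert_self _ _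
    rw [Finset.mem_symmDiff] at h0sd
    rcases h0sd with ⟨h1, _⟩ | ⟨h1, _⟩
    · exact h1
    · exact absurd h1 h0
  obtain ⟨c, hc0, hA⟩ := eq_pair_zero A.2 h0A
  refine ⟨c, ?_, hA⟩
  by_contra hcB
  have hcsd : c ∈ symmDiff A.1 B.1 := by
    rw [Finset.mem_symmDiff]
    exact Or.inl ⟨by rw [hA]; simp, hcB⟩
  rw [hsd] at hcsd
  have hcw : c = w := by
    rcases Finset.mem_insert.mp hcsd with h | h
    · exact absurd h hc0
    · exact Finset.mem_singleton.mp h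
  obtain ⟨i, hi⟩ := Finset.card_pos.mp (by rw [B.2]; norm_num)
  have hi0 : i ≠ 0 := fun h => h0 (h ▸ hi)
  have hiA : i ∉ A.1 := by
    rw [hA]
    simp only [Finset.mem_insert, Finset.mem_singleton]
    rintro (rfl | rfl)
    · exact hi0 rfl
    · exact hcB hi
  have hisd : i ∈ symmDiff A.1 B.1 := by
    rw [Finset.mem_symmDiff]; exact Or.inr ⟨hi, hiA⟩
  rw [hsd] at hisd
  rcases Finset.mem_insert.mp hisd with h | h
  · exact hi0 h
  · have : i = c := (Finset.mem_singleton.mp h).trans hcw.symm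
    exact hcB (this ▸ hi)

/-- The dominating family: `{0, k+1}` for `k < n-2`, and `{n-1, n}` otherwise. -/
def f (n : ℕ) (hn : 2 ≤ n) (k : Fin (n - 1)) : {A : Finset (Fin (n+1)) // A.card = 2} :=
  if h : (k : ℕ) < n - 2 then
    ⟨{0, ⟨(k : ℕ) + 1, by omega⟩},
      Finset.card_pair (by simp [Fin.ext_iff])⟩
  else
    ⟨{⟨n - 1, by omega⟩, ⟨n, by omega⟩},
      Finset.card_pair (fin_mk_ne (by omega) (by omega) (by omega))⟩

lemma f_inj (n : ℕ) (hn : 2 ≤ n) : Function.Injective (f n hn) := by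
  intro k l h
  have hk1 := k.2
  have hl1 := l.2
  unfold f at h
  split_ifs at h with hk hl hl
  · have h' : ({0, (⟨(k : ℕ) + 1, by omega⟩ : Fin (n+1))} : Finset (Fin (n+1)))
        = {0, ⟨(l : ℕ) + 1, by omega⟩} := Subtype.ext_iff.mp h
    have : (⟨(k : ℕ) + 1, by omega⟩ : Fin (n+1)) ∈
        ({0, (⟨(l : ℕ) + 1, by omega⟩ : Fin (n+1))} : Finset (Fin (n+1))) := by
      rw [← h']; simp
    simp only [Finset.mem_insert, Finset.mem_singleton, Fin.ext_iff] at this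
    rcases this with h1 | h1
    · simp at h1
    · exact Fin.ext (by omega)
  · exfalso
    have h' : ({0, (⟨(k : ℕ) + 1, by omega⟩ : Fin (n+1))} : Finset (Fin (n+1)))
        = {⟨n - 1, by omega⟩, ⟨n, by omega⟩} := Subtype.ext_iff.mp h
    have : (0 : Fin (n+1)) ∈ ({(⟨n - 1, by omega⟩ : Fin (n+1)), ⟨n, by omega⟩} :
        Finset (Fin (n+1))) := by rw [← h']; simp
    simp only [Finset.mem_insert, Finset.mem_singleton, Fin.ext_iff] at this
    simp at this
    omega
  · exfalso
    have h' : ({(⟨n - 1, by omega⟩ : Fin (n+1)), ⟨n, by omega⟩} : Finset (Fin (n+1)))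
        = {0, ⟨(l : ℕ) + 1, by omega⟩} := Subtype.ext_iff.mp h
    have : (0 : Fin (n+1)) ∈ ({(⟨n - 1, by omega⟩ : Fin (n+1)), ⟨n, by omega⟩} :
        Finset (Fin (n+1))) := by rw [h']; simp
    simp only [Finset.mem_insert, Finset.mem_singleton, Fin.ext_iff] at this
    simp at this
    omega
  · exact Fin.ext (by omega)

lemma mem_image_A (n : ℕ) (hn : 2 ≤ n) (c : Fin (n+1)) (hc0 : c ≠ 0)
    (hc : (c : ℕ) ≤ n - 2) :
    (⟨{0, c}, Finset.card_pair (Ne.symm hc0)⟩ : {A : Finset (Fin (n+1)) // A.card = 2})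
      ∈ Finset.image (f n hn) Finset.univ := by
  have hcv : 1 ≤ (c : ℕ) := by
    rcases Nat.eq_zero_or_pos (c : ℕ) with h | h
    · exact absurd (Fin.ext h) hc0
    · exact h
  refine Finset.mem_image.mpr ⟨⟨(c : ℕ) - 1, by omega⟩, Finset.mem_univ _, ?_⟩
  unfold f
  rw [dif_pos (by simp; omega)]
  apply Subtype.ext
  exact congrArg (insert (0 : Fin (n+1)))
    (congrArg (fun y => ({y} : Finset (Fin (n+1)))) (Fin.ext (by simp; omega)))

lemma mem_image_B (n : ℕ) (hn : 2 ≤ n) :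
    (⟨{⟨n - 1, by omega⟩, ⟨n, by omega⟩},
      Finset.card_pair (fin_mk_ne (by omega) (by omega) (by omega))⟩ :
        {A : Finset (Fin (n+1)) // A.card = 2}) ∈ Finset.image (f n hn) Finset.univ := by
  refine Finset.mem_image.mpr ⟨⟨n - 2, by omega⟩, Finset.mem_univ _, ?_⟩
  unfold f
  rw [dif_neg (by simp)]

lemma upper_dom (n : ℕ) (hn : 2 ≤ n) :
    IsDominatingSet (tokenGraph (starGraph n) 2)
      ↑(Finset.image (f n hn) Finset.univ) := by
  classical
  intro X
  set p : Fin (n+1) := ⟨n - 1, by omega⟩ with hp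
  set q : Fin (n+1) := ⟨n, by omega⟩ with hq
  have hp0 : p ≠ 0 := by simp [hp, Fin.ext_iff]; omega
  have hq0 : q ≠ 0 := by simp [hq, Fin.ext_iff]; omega
  have hpq : p ≠ q := by simp [hp, hq, Fin.ext_iff]; omega
  by_cases h0 : (0 : Fin (n+1)) ∈ X.1
  · obtain ⟨c, hc0, hX⟩ := eq_pair_zero X.2 h0
    by_cases hc : (c : ℕ) ≤ n - 2
    · left
      have := mem_image_A n hn c hc0 hc
      rw [Finset.mem_coe]
      convert this using 1
      exact Subtype.ext hX
    · -- c = p or c = q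
      right
      refine ⟨_, by rw [Finset.mem_coe]; exact mem_image_B n hn, ?_⟩
      have hcval : (c : ℕ) = n - 1 ∨ (c : ℕ) = n := by omega
      rcases hcval with h | h
      · have hcp : c = p := Fin.ext h
        refine ⟨q, 0, ⟨hq0, Or.inr rfl⟩, ?_⟩
        show symmDiff ({p, q} : Finset (Fin (n+1))) X.1 = {q, 0}
        rw [hX, hcp, Finset.pair_comm p q]
        exact symmDiff_pair hpq.symm hp0.symm hq0
      · have hcq : c = q := Fin.ext h
        refine ⟨p, 0, ⟨hp0, Or.inr rfl⟩, ?_⟩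
        show symmDiff ({p, q} : Finset (Fin (n+1))) X.1 = {p, 0}
        rw [hX, hcq]
        exact symmDiff_pair hpq hq0.symm hp0
  · obtain ⟨a, b, hab, hX⟩ := Finset.card_eq_two.mp X.2
    have ha0 : a ≠ 0 := fun h => h0 (hX ▸ (by rw [h]; simp))
    have hb0 : b ≠ 0 := fun h => h0 (hX ▸ (by rw [h]; simp))
    by_cases hPQ : X.1 = ({p, q} : Finset (Fin (n+1)))
    · left
      rw [Finset.mem_coe]
      have := mem_image_B n hn
      convert this using 1
      exact Subtype.ext hPQ
    · -- there is an element of X.1 outside {0, p, q}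
      obtain ⟨c, d, hcd, hXcd, hcp, hcq⟩ :
          ∃ c d, c ≠ d ∧ X.1 = {d, c} ∧ c ≠ p ∧ c ≠ q := by
        by_cases hap : a ≠ p ∧ a ≠ q
        · exact ⟨a, b, hab, by rw [hX, Finset.pair_comm], hap.1, hap.2⟩
        · have ha : a = p ∨ a = q := by tauto
          have hbp : b ≠ p ∧ b ≠ q := by
            constructor
            · rintro rfl
              rcases ha with rfl | rfl
              · exact hab rfl
              · exact hPQ (by rw [hX, Finset.pair_comm])
            · rintro rfl
              rcases ha with rfl | rfl
              · exact hPQ (by rw [hX])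
              · exact hab rfl
          exact ⟨b, a, fun h => hab h.symm, by rw [hX], hbp.1, hbp.2⟩
      have hc0 : c ≠ 0 := fun h => h0 (hXcd ▸ (by rw [h]; simp))
      have hd0 : d ≠ 0 := fun h => h0 (hXcd ▸ (by rw [h]; simp))
      have hcle : (c : ℕ) ≤ n - 2 := by
        have := c.2
        have h1 : (c : ℕ) ≠ 0 := fun h => hc0 (Fin.ext h)
        have h2 : (c : ℕ) ≠ n - 1 := fun h => hcp (Fin.ext h)
        have h3 : (c : ℕ) ≠ n := fun h => hcq (Fin.ext h)
        omega
      right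
      refine ⟨_, by rw [Finset.mem_coe]; exact mem_image_A n hn c hc0 hcle, ?_⟩
      refine ⟨0, d, ⟨fun h => hd0 h.symm, Or.inl rfl⟩, ?_⟩
      rw [hXcd]
      exact symmDiff_pair (Ne.symm hc0) hcd.symm (Ne.symm hd0)

lemma choose_two_ge (ℓ : ℕ) : ℓ - 1 ≤ ℓ.choose 2 := by
  cases ℓ with
  | zero => simp
  | succ l =>
    rw [Nat.choose_succ_succ, Nat.choose_one_right]
    omega

lemma lower_bound (n : ℕ) (hn : 2 ≤ n)
    (D : Finset {A : Finset (Fin (n+1)) // A.card = 2})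
    (hD : IsDominatingSet (tokenGraph (starGraph n) 2) ↑D) :
    n - 1 ≤ D.card := by
  classical
  set L : Finset (Fin (n+1)) :=
    Finset.univ.filter (fun i => i ≠ 0 ∧ ∀ A ∈ D, A.1 ≠ ({0, i} : Finset (Fin (n+1))))
    with hL
  set leaves : Finset (Fin (n+1)) := Finset.univ.filter (fun i => i ≠ 0) with hleaves
  have hLsub : L ⊆ leaves := by
    intro i hi
    simp only [hL, hleaves, Finset.mem_filter, Finset.mem_univ, true_and] at hi ⊢
    exact hi.1
  have hleavescard : leaves.card = n := by
    rw [hleaves, Finset.filter_ne', Finset.card_erase_of_mem (Finset.mem_univ _)]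
    simp
  set S1 := D.filter (fun A => (0 : Fin (n+1)) ∈ A.1) with hS1
  set S2 := D.filter (fun A => (0 : Fin (n+1)) ∉ A.1) with hS2
  have hsum : S1.card + S2.card = D.card := by
    rw [hS1, hS2]
    exact Finset.card_filter_add_card_filter_not
      (fun A : {A : Finset (Fin (n+1)) // A.card = 2} => (0 : Fin (n+1)) ∈ A.1)
  -- Claim 1
  have hclaim1 : n - L.card ≤ S1.card := by
    have hsub : (leaves \ L).image (fun i => ({0, i} : Finset (Fin (n+1))))
        ⊆ S1.image (fun A => A.1) := by
      intro s hs
      obtain ⟨i, hi, rfl⟩ := Finset.mem_image.mp hs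
      obtain ⟨hileaf, hinL⟩ := Finset.mem_sdiff.mp hi
      have hi0 : i ≠ 0 := by
        simp only [hleaves, Finset.mem_filter] at hileaf; exact hileaf.2
      have : ∃ A ∈ D, A.1 = ({0, i} : Finset (Fin (n+1))) := by
        by_contra hc
        push_neg at hc
        apply hinL
        simp only [hL, Finset.mem_filter, Finset.mem_univ, true_and]
        exact ⟨hi0, hc⟩
      obtain ⟨A, hAD, hA⟩ := this
      refine Finset.mem_image.mpr ⟨A, ?_, hA⟩
      simp only [hS1, Finset.mem_filter]
      exact ⟨hAD, by rw [hA]; simp⟩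
    have hinjOn : Set.InjOn (fun i => ({0, i} : Finset (Fin (n+1))))
        (↑(leaves \ L) : Set (Fin (n+1))) := by
      intro i hi j hj hij
      simp only at hij
      have hi0 : i ≠ 0 := by
        have hi' := Finset.mem_coe.mp hi
        have := (Finset.mem_sdiff.mp hi').1
        simp only [hleaves, Finset.mem_filter] at this
        exact this.2
      have : i ∈ ({0, j} : Finset (Fin (n+1))) := by rw [← hij]; simp
      rcases Finset.mem_insert.mp this with h | h
      · exact absurd h hi0
      · exact Finset.mem_singleton.mp h
    calc n - L.card = (leaves \ L).card := by
          rw [Finset.card_sdiff_of_subset hLsub, hleavescard]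
      _ = ((leaves \ L).image (fun i => ({0, i} : Finset (Fin (n+1))))).card :=
          (Finset.card_image_of_injOn hinjOn).symm
      _ ≤ (S1.image (fun A => A.1)).card := Finset.card_le_card hsub
      _ ≤ S1.card := Finset.card_image_le
  -- Claim 2
  have hclaim2 : L.card.choose 2 ≤ S2.card := by
    have hsub : L.powersetCard 2 ⊆ S2.image (fun A => A.1) := by
      intro s hs
      obtain ⟨hsL, hs2⟩ := Finset.mem_powersetCard.mp hs
      have h0s : (0 : Fin (n+1)) ∉ s := by
        intro h
        have := hsL h
        simp only [hL, Finset.mem_filter, Finset.mem_univ, true_and] at this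
        exact this.1 rfl
      set X : {A : Finset (Fin (n+1)) // A.card = 2} := ⟨s, hs2⟩ with hXdef
      rcases hD X with hX | ⟨A, hAD, hadj⟩
      · refine Finset.mem_image.mpr ⟨X, ?_, rfl⟩
        simp only [hS2, Finset.mem_filter]
        exact ⟨Finset.mem_coe.mp hX, h0s⟩
      · exfalso
        obtain ⟨i, his, hA⟩ := adj_struct hadj h0s
        have hiL := hsL his
        simp only [hL, Finset.mem_filter, Finset.mem_univ, true_and] at hiL
        exact hiL.2 A (Finset.mem_coe.mp hAD) hA
    calc L.card.choose 2 = (L.powersetCard 2).card := (Finset.card_powersetCard 2 L).symm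
      _ ≤ (S2.image (fun A => A.1)).card := Finset.card_le_card hsub
      _ ≤ S2.card := Finset.card_image_le
  have hLn : L.card ≤ n := by
    have h := Finset.card_le_card hLsub
    omega
  have hch := choose_two_ge L.card
  omega

end TokenStarAux

/-- For every integer `n ≥ 2`, the domination number of the 2-token graph of
the star graph satisfies `γ(F₂(Sₙ)) = n - 1`. -/
theorem domination_two_token_star (n : ℕ) (hn : 2 ≤ n) :
    dominationNumber (tokenGraph (starGraph n) 2) = n - 1 := by
  classical
  have hmem : (n - 1) ∈ {m : ℕ | ∃ D : Finset {A : Finset (Fin (n+1)) // A.card = 2},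
      IsDominatingSet (tokenGraph (starGraph n) 2) ↑D ∧ D.card = m} := by
    refine ⟨Finset.image (TokenStarAux.f n hn) Finset.univ, TokenStarAux.upper_dom n hn, ?_⟩
    rw [Finset.card_image_of_injective _ (TokenStarAux.f_inj n hn)]
    simp
  apply le_antisymm
  · exact Nat.sInf_le hmem
  · apply le_csInf ⟨_, hmem⟩
    rintro m ⟨D, hD, rfl⟩
    exact TokenStarAux.lower_bound n hn D hD
end

section
/- Let n ≥ 2 and let X be any set of vertices of the 2-token graph F_2(S_n) with |X| = n − 2. Then there exists a 2-element subset B of {1,…,n} (i.e., a vertex of F_2(S_n) not containing 0) such that B ∉ X and B is not adjacent in F_2(S_n) to any vertex of X. In particular, X is not a dominating set of F_2(S_n). -/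
/-- Any set `X` of `n - 2` vertices of `F₂(Sₙ)` misses some vertex `B` not
containing `0` (neither in `X` nor adjacent to a vertex of `X`); in particular,
`X` is not a dominating set. -/
theorem small_set_not_dominating_star (n : ℕ) (hn : 2 ≤ n)
    (X : Finset {A : Finset (Fin (n + 1)) // A.card = 2}) (hX : X.card = n - 2) :
    (∃ B : {A : Finset (Fin (n + 1)) // A.card = 2}, (0 : Fin (n + 1)) ∉ B.1 ∧
      B ∉ X ∧ ∀ A ∈ X, ¬ (tokenGraph (starGraph n) 2).Adj A B) ∧
    ¬ IsDominatingSet (tokenGraph (starGraph n) 2) ↑X := by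
  classical
  -- blocked leaves: leaves adjacent (in the original star) to the center inside members of X
  set S : Finset (Fin (n + 1)) :=
    (X.filter (fun A => (0 : Fin (n + 1)) ∈ A.1)).biUnion (fun A => A.1.erase 0) with hS
  set T : Finset (Fin (n + 1)) := (Finset.univ.erase 0) \ S with hT
  set k := (X.filter (fun A => (0 : Fin (n + 1)) ∈ A.1)).card with hk
  set r := (X.filter (fun A => ¬ (0 : Fin (n + 1)) ∈ A.1)).card with hr
  have hkr : k + r = n - 2 := by
    rw [hk, hr, Finset.card_filter_add_card_filter_not, hX]
  have hScard : S.card ≤ k := by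
    refine le_trans Finset.card_biUnion_le ?_
    rw [hk]
    refine le_trans (Finset.sum_le_card_nsmul _ _ 1 ?_) (by simp)
    intro A hA
    rw [Finset.mem_filter] at hA
    have := Finset.card_erase_of_mem hA.2
    rw [A.2] at this
    omega
  have hTcard : r + 2 ≤ T.card := by
    have h1 : (Finset.univ.erase (0 : Fin (n + 1))).card = n := by
      rw [Finset.card_erase_of_mem (Finset.mem_univ _), Finset.card_univ, Fintype.card_fin]
      omega
    have h2 := Finset.le_card_sdiff S (Finset.univ.erase (0 : Fin (n + 1)))
    rw [h1] at h2
    rw [hT]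
    omega
  -- candidates: 2-element subsets of T
  set C : Finset (Finset (Fin (n + 1))) := Finset.powersetCard 2 T with hC
  have hCcard : r + 1 ≤ C.card := by
    rw [hC, Finset.card_powersetCard]
    have h1 : (r + 2).choose 2 ≤ T.card.choose 2 := Nat.choose_le_choose 2 hTcard
    have h2 : r + 1 ≤ (r + 2).choose 2 := by
      rw [Nat.choose_two_right]
      have h3 : r + 2 - 1 = r + 1 := rfl
      rw [h3]
      have : (r + 1) * 2 ≤ (r + 2) * (r + 1) := by nlinarith
      exact (Nat.le_div_iff_mul_le (by norm_num)).mpr this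
    omega
  -- bad candidates: those that belong to X
  set Bad : Finset (Finset (Fin (n + 1))) := C.filter (fun B => ∃ A ∈ X, A.1 = B) with hBad
  have hTsub : T ⊆ Finset.univ.erase 0 := Finset.sdiff_subset
  have hBadcard : Bad.card ≤ r := by
    have hsub : Bad ⊆ (X.filter (fun A => ¬ (0 : Fin (n + 1)) ∈ A.1)).image (fun A => A.1) := by
      intro B hB
      rw [hBad, Finset.mem_filter] at hB
      obtain ⟨hBC, A, hAX, hAB⟩ := hB
      refine Finset.mem_image.mpr ⟨A, ?_, hAB⟩
      rw [Finset.mem_filter]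
      refine ⟨hAX, ?_⟩
      intro h0
      have hBT : B ⊆ T := (Finset.mem_powersetCard.mp (hC ▸ hBC)).1
      have : (0 : Fin (n + 1)) ∈ T := hBT (hAB ▸ h0)
      exact (Finset.notMem_erase _ _) (hTsub this)
    exact le_trans (Finset.card_le_card hsub) (le_trans Finset.card_image_le le_rfl)
  -- pick a good candidate
  have hex : ∃ B ∈ C, B ∉ Bad := by
    by_contra h
    push_neg at h
    have := Finset.card_le_card h
    omega
  obtain ⟨B, hBC, hBbad⟩ := hex
  have hBmem := Finset.mem_powersetCard.mp (hC ▸ hBC)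
  have hBT : B ⊆ T := hBmem.1
  have hBcard : B.card = 2 := hBmem.2
  have hB0 : (0 : Fin (n + 1)) ∉ B := fun h0 =>
    (Finset.notMem_erase _ _) (hTsub (hBT h0))
  have hBX : (⟨B, hBcard⟩ : {A : Finset (Fin (n + 1)) // A.card = 2}) ∉ X := by
    intro hmem
    exact hBbad (by rw [hBad, Finset.mem_filter]; exact ⟨hBC, ⟨B, hBcard⟩, hmem, rfl⟩)
  have hnadj : ∀ A ∈ X, ¬ (tokenGraph (starGraph n) 2).Adj A ⟨B, hBcard⟩ := by
    intro A hAX hadj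
    obtain ⟨u, v, huv, hsd⟩ := hadj
    obtain ⟨hne, h0⟩ := huv
    · -- 0 ∈ {u, v}
      have hm0 : (0 : Fin (n + 1)) ∈ ({u, v} : Finset (Fin (n + 1))) := by
        rcases h0 with h | h <;> simp [h]
      -- 0 ∈ symmDiff A.1 B, and 0 ∉ B, so 0 ∈ A.1
      have h0sd : (0 : Fin (n + 1)) ∈ symmDiff A.1 B := by
        rw [hsd]; exact hm0
      have h0A : (0 : Fin (n + 1)) ∈ A.1 := by
        rcases Finset.mem_symmDiff.mp h0sd with ⟨h1, _⟩ | ⟨h1, _⟩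
        · exact h1
        · exact absurd h1 hB0
      -- A = {0, a} for the unique leaf a
      have herase : (A.1.erase 0).card = 1 := by
        rw [Finset.card_erase_of_mem h0A, A.2]
      obtain ⟨a, ha⟩ := Finset.card_eq_one.mp herase
      have haA : a ∈ A.1 := Finset.erase_subset _ _ (ha ▸ Finset.mem_singleton_self a)
      have ha0 : a ≠ 0 := Finset.ne_of_mem_erase (ha ▸ Finset.mem_singleton_self a)
      have haS : a ∈ S := by
        rw [hS]
        refine Finset.mem_biUnion.mpr ⟨A, ?_, ha ▸ Finset.mem_singleton_self a⟩
        rw [Finset.mem_filter]; exact ⟨hAX, h0A⟩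
      have haB : a ∉ B := by
        intro hmem
        have : a ∈ T := hBT hmem
        rw [hT, Finset.mem_sdiff] at this
        exact this.2 haS
      -- then a ∈ symmDiff, so symmDiff = {0, a} = A.1, so B = ∅
      have hasd : a ∈ symmDiff A.1 B := Finset.mem_symmDiff.mpr (Or.inl ⟨haA, haB⟩)
      have hma : a ∈ ({u, v} : Finset (Fin (n + 1))) := by rw [← hsd]; exact hasd
      have hA1 : A.1 = {0, a} := by
        have h1 : A.1 = insert 0 (A.1.erase 0) := (Finset.insert_erase h0A).symm
        rw [h1, ha]
      have hpair : ({0, a} : Finset (Fin (n + 1))) = {u, v} := by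
        refine Finset.eq_of_subset_of_card_le ?_ ?_
        · intro x hx
          rcases Finset.mem_insert.mp hx with h | h
          · rw [h]; exact hm0
          · rw [Finset.mem_singleton.mp h]; exact hma
        · rw [Finset.card_pair hne, Finset.card_pair (Ne.symm ha0)]
      have hsd' : symmDiff A.1 B = A.1 := by
        rw [hsd, ← hpair, hA1]
      have hBempty : B = ∅ := by
        have := symmDiff_eq_left.mp hsd'
        simpa using this
      rw [hBempty] at hBcard
      simp at hBcard
  refine ⟨⟨⟨B, hBcard⟩, hB0, hBX, hnadj⟩, ?_⟩
  intro hdom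
  rcases hdom ⟨B, hBcard⟩ with hmem | ⟨A, hAX, hadj⟩
  · exact hBX (by simpa using hmem)
  · exact hnadj A (by simpa using hAX) hadj
end

section
/- Let n and k be integers with 2 ≤ k and 2k ≤ n. Then the domination number of the k-token graph of the star graph satisfies γ(F_k(S_n)) > (1/k)·C(n, k−1), where C(n, k−1) denotes the binomial coefficient n choose k−1. -/
lemma zero_mem_symmDiff {n k : ℕ} {A B : {A : Finset (Fin (n+1)) // A.card = k}}
    (h : (tokenGraph (starGraph n) k).Adj A B) : (0 : Fin (n+1)) ∈ symmDiff A.1 B.1 := by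
  obtain ⟨u, v, ⟨hne, h0⟩, hs⟩ := h
  rw [hs]
  rcases h0 with h0 | h0 <;> subst h0 <;> simp

lemma adj_structure {n k : ℕ} {d A : {A : Finset (Fin (n+1)) // A.card = k}}
    (h : (tokenGraph (starGraph n) k).Adj d A) (hd : (0:Fin (n+1)) ∉ d.1)
    (hA : (0:Fin (n+1)) ∈ A.1) :
    ∃ x ∈ d.1, A.1 = insert 0 (d.1.erase x) := by
  obtain ⟨u, v, ⟨hne, h0⟩, hs⟩ := h
  -- WLOG u = 0
  have hs' : symmDiff d.1 A.1 = {0, (if u = 0 then v else u)} := by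
    rcases h0 with h0 | h0 <;> subst h0
    · simpa using hs
    · simp only [if_neg hne]
      rw [hs, Finset.pair_comm]
  set x := (if u = 0 then v else u) with hxdef
  have hx0 : x ≠ 0 := by
    rcases h0 with h0 | h0 <;> subst h0 <;> simp [hxdef, hne, Ne.symm hne] <;> tauto
  have hxmem : x ∈ symmDiff d.1 A.1 := by rw [hs']; simp
  have hxd : x ∈ d.1 ∧ x ∉ A.1 := by
    rw [Finset.mem_symmDiff] at hxmem
    rcases hxmem with h1 | h1
    · exact ⟨h1.1, h1.2⟩
    · exfalso
      -- then d ⊆ A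
      have hsub : d.1 ⊆ A.1 := by
        intro y hy
        by_contra hyA
        have : y ∈ symmDiff d.1 A.1 := Finset.mem_symmDiff.mpr (Or.inl ⟨hy, hyA⟩)
        rw [hs'] at this
        simp only [Finset.mem_insert, Finset.mem_singleton] at this
        rcases this with rfl | rfl
        · exact hd hy
        · exact h1.2 hy
      have : d.1 = A.1 := Finset.eq_of_subset_of_card_le hsub (by rw [d.2, A.2])
      rw [this, symmDiff_self] at hs'
      have : (0:Fin (n+1)) ∈ (⊥ : Finset (Fin (n+1))) := by rw [hs']; simp
      simp at this
  refine ⟨x, hxd.1, ?_⟩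
  ext y
  have hy := Finset.ext_iff.mp hs' y
  simp only [Finset.mem_symmDiff, Finset.mem_insert, Finset.mem_singleton, Finset.mem_erase] at hy ⊢
  by_cases h1 : y = 0
  · subst h1; tauto
  · by_cases h2 : y = x
    · subst h2; tauto
    · tauto

lemma key (n k : ℕ) (hk : 2 ≤ k) (hkn : 2*k ≤ n)
    (D : Finset {A : Finset (Fin (n+1)) // A.card = k})
    (hD : IsDominatingSet (tokenGraph (starGraph n) k) ↑D) :
    n.choose (k-1) < k * D.card := by
  classical
  obtain ⟨w0s, _, hw0⟩ := Finset.exists_subset_card_eq (s := (Finset.univ : Finset (Fin (n+1))))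
    (n := k) (by simp; omega)
  let w0 : {A : Finset (Fin (n+1)) // A.card = k} := ⟨w0s, hw0⟩
  have hcard_er : ((Finset.univ : Finset (Fin (n+1))).erase 0).card = n := by
    rw [Finset.card_erase_of_mem (Finset.mem_univ _)]; simp
  let T : Finset {A : Finset (Fin (n+1)) // A.card = k} :=
    Finset.univ.filter (fun A => (0:Fin (n+1)) ∈ A.1)
  have hT : n.choose (k-1) ≤ T.card := by
    have := Finset.card_le_card_of_injOn
      (f := fun s : Finset (Fin (n+1)) => if h : (insert (0:Fin (n+1)) s).card = k
        then (⟨insert 0 s, h⟩ : {A : Finset (Fin (n+1)) // A.card = k}) else w0)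
      (s := ((Finset.univ : Finset (Fin (n+1))).erase 0).powersetCard (k-1)) (t := T) ?_ ?_
    · rwa [Finset.card_powersetCard, hcard_er] at this
    · intro s hs
      rw [Finset.mem_coe, Finset.mem_powersetCard] at hs
      have h0s : (0:Fin (n+1)) ∉ s := fun h => (Finset.mem_erase.mp (hs.1 h)).1 rfl
      have hc : (insert (0:Fin (n+1)) s).card = k := by
        rw [Finset.card_insert_of_notMem h0s, hs.2]; omega
      simp only [dif_pos hc, T, Finset.mem_coe, Finset.mem_filter, Finset.mem_univ, true_and]
      exact Finset.mem_insert_self _ _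
    · intro s hs t ht hst
      rw [Finset.mem_coe, Finset.mem_powersetCard] at hs ht
      have h0s : (0:Fin (n+1)) ∉ s := fun h => (Finset.mem_erase.mp (hs.1 h)).1 rfl
      have h0t : (0:Fin (n+1)) ∉ t := fun h => (Finset.mem_erase.mp (ht.1 h)).1 rfl
      have hcs : (insert (0:Fin (n+1)) s).card = k := by
        rw [Finset.card_insert_of_notMem h0s, hs.2]; omega
      have hct : (insert (0:Fin (n+1)) t).card = k := by
        rw [Finset.card_insert_of_notMem h0t, ht.2]; omega
      simp only [dif_pos hcs, dif_pos hct] at hst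
      have : insert (0:Fin (n+1)) s = insert 0 t := congrArg Subtype.val hst
      calc s = (insert (0:Fin (n+1)) s).erase 0 := by rw [Finset.erase_insert h0s]
        _ = (insert (0:Fin (n+1)) t).erase 0 := by rw [this]
        _ = t := Finset.erase_insert h0t
  let g : {A : Finset (Fin (n+1)) // A.card = k} → {A : Finset (Fin (n+1)) // A.card = k} :=
    fun A => if h : ∃ d, d ∈ D ∧ (tokenGraph (starGraph n) k).Adj d A then h.choose else A
  have hg : ∀ A ∈ T, g A ∈ D := by
    intro A _
    rcases hD A with hA | ⟨d, hd, hadj⟩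
    · by_cases h : ∃ d, d ∈ D ∧ (tokenGraph (starGraph n) k).Adj d A
      · simp only [g, dif_pos h]; exact h.choose_spec.1
      · have hgAA : g A = A := by simp only [g]; rw [dif_neg h]
        rw [hgAA]; exact Finset.mem_coe.mp hA
    · have h : ∃ d', d' ∈ D ∧ (tokenGraph (starGraph n) k).Adj d' A :=
        ⟨d, Finset.mem_coe.mp hd, hadj⟩
      simp only [g, dif_pos h]; exact h.choose_spec.1
  have hgspec : ∀ A, g A = A ∨ (tokenGraph (starGraph n) k).Adj (g A) A := by
    intro A
    by_cases h : ∃ d, d ∈ D ∧ (tokenGraph (starGraph n) k).Adj d A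
    · right; simp only [g, dif_pos h]; exact h.choose_spec.2
    · left; simp only [g]; rw [dif_neg h]
  have hsum : T.card = ∑ d ∈ D, (T.filter (fun A => g A = d)).card :=
    Finset.card_eq_sum_card_fiberwise hg
  have hfib0 : ∀ d ∈ D, (0:Fin (n+1)) ∈ d.1 → (T.filter (fun A => g A = d)).card ≤ 1 := by
    intro d _ hd0
    have : T.filter (fun A => g A = d) ⊆ {d} := by
      intro A hA
      rw [Finset.mem_filter] at hA
      obtain ⟨hAT, hgA⟩ := hA
      rcases hgspec A with h | h
      · rw [Finset.mem_singleton]; rw [← hgA, h]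
      · exfalso
        rw [hgA] at h
        have h0 := zero_mem_symmDiff h
        rw [Finset.mem_symmDiff] at h0
        have hA0 : (0:Fin (n+1)) ∈ A.1 := (Finset.mem_filter.mp hAT).2
        tauto
    simpa using Finset.card_le_card this
  have hfib_le : ∀ d ∈ D, (T.filter (fun A => g A = d)).card ≤ k := by
    intro d hd
    by_cases hd0 : (0:Fin (n+1)) ∈ d.1
    · calc (T.filter (fun A => g A = d)).card ≤ 1 := hfib0 d hd hd0
        _ ≤ k := by omega
    · have hsub : (T.filter (fun A => g A = d)).image Subtype.val ⊆
          d.1.image (fun x => insert (0:Fin (n+1)) (d.1.erase x)) := by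
        intro s hs
        rw [Finset.mem_image] at hs
        obtain ⟨A, hA, rfl⟩ := hs
        rw [Finset.mem_filter] at hA
        obtain ⟨hAT, hgA⟩ := hA
        have hA0 : (0:Fin (n+1)) ∈ A.1 := (Finset.mem_filter.mp hAT).2
        rcases hgspec A with h | h
        · exfalso; rw [h] at hgA; rw [hgA] at hA0; exact hd0 hA0
        · rw [hgA] at h
          obtain ⟨x, hx, hAx⟩ := adj_structure h hd0 hA0
          exact Finset.mem_image.mpr ⟨x, hx, hAx.symm⟩
      calc (T.filter (fun A => g A = d)).card
          = ((T.filter (fun A => g A = d)).image Subtype.val).card :=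
            (Finset.card_image_of_injective _ Subtype.val_injective).symm
        _ ≤ (d.1.image (fun x => insert (0:Fin (n+1)) (d.1.erase x))).card :=
            Finset.card_le_card hsub
        _ ≤ d.1.card := Finset.card_image_le
        _ = k := d.2
  by_cases hcase : ∃ d ∈ D, (0:Fin (n+1)) ∈ d.1
  · obtain ⟨d0, hd0D, hd00⟩ := hcase
    have hDpos : 1 ≤ D.card := Finset.card_pos.mpr ⟨d0, hd0D⟩
    have hsum2 : T.card ≤ 1 + (D.card - 1) * k := by
      rw [hsum, ← Finset.add_sum_erase _ _ hd0D]
      have h2 : ∑ d ∈ D.erase d0, (T.filter (fun A => g A = d)).card ≤ (D.card - 1) * k := by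
        calc ∑ d ∈ D.erase d0, (T.filter (fun A => g A = d)).card
            ≤ ∑ _d ∈ D.erase d0, k := Finset.sum_le_sum (fun d hd =>
              hfib_le d (Finset.mem_of_mem_erase hd))
          _ = (D.card - 1) * k := by rw [Finset.sum_const, smul_eq_mul,
              Finset.card_erase_of_mem hd0D]
      have h1 := hfib0 d0 hd0D hd00
      omega
    have hfin : n.choose (k-1) ≤ 1 + (D.card - 1) * k := le_trans hT hsum2
    obtain ⟨m, hm⟩ : ∃ m, D.card = m + 1 := ⟨D.card - 1, by omega⟩
    rw [hm] at hfin ⊢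
    have h1 : (m + 1 - 1) * k = m * k := by simp
    rw [h1] at hfin
    have h2 : k * (m+1) = m * k + k := by ring
    omega
  · push_neg at hcase
    have hall : ∀ (s : Finset (Fin (n+1))) (hs : s.card = k), (0:Fin (n+1)) ∉ s →
        (⟨s, hs⟩ : {A : Finset (Fin (n+1)) // A.card = k}) ∈ D := by
      intro s hs h0s
      rcases hD ⟨s, hs⟩ with h | ⟨d, hd, hadj⟩
      · exact Finset.mem_coe.mp h
      · exfalso
        have h0 := zero_mem_symmDiff hadj
        rw [Finset.mem_symmDiff] at h0
        have := hcase d (Finset.mem_coe.mp hd)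
        simp only at h0
        tauto
    have hDk : n.choose k ≤ D.card := by
      have := Finset.card_le_card_of_injOn
        (f := fun s : Finset (Fin (n+1)) => if h : s.card = k
          then (⟨s, h⟩ : {A : Finset (Fin (n+1)) // A.card = k}) else w0)
        (s := ((Finset.univ : Finset (Fin (n+1))).erase 0).powersetCard k) (t := D) ?_ ?_
      · rwa [Finset.card_powersetCard, hcard_er] at this
      · intro s hs
        rw [Finset.mem_coe, Finset.mem_powersetCard] at hs
        have h0s : (0:Fin (n+1)) ∉ s := fun h => (Finset.mem_erase.mp (hs.1 h)).1 rfl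
        simp only [dif_pos hs.2]
        exact hall s hs.2 h0s
      · intro s hs t ht hst
        rw [Finset.mem_coe, Finset.mem_powersetCard] at hs ht
        simp only [dif_pos hs.2, dif_pos ht.2] at hst
        exact congrArg Subtype.val hst
    have hmono : n.choose (k-1) ≤ n.choose k := by
      have heq : n.choose ((k-1)+1) * ((k-1)+1) = n.choose (k-1) * (n - (k-1)) :=
        Nat.choose_succ_right_eq n (k-1)
      have hk1 : (k-1)+1 = k := by omega
      rw [hk1] at heq
      have hge : k ≤ n - (k-1) := by omega
      have hle : n.choose (k-1) * k ≤ n.choose (k-1) * (n - (k-1)) :=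
        Nat.mul_le_mul_left _ hge
      rw [← heq] at hle
      exact Nat.le_of_mul_le_mul_right hle (by omega)
    have hpos : 1 ≤ n.choose k := Nat.choose_pos (by omega)
    calc n.choose (k-1) ≤ n.choose k := hmono
      _ < 2 * n.choose k := by omega
      _ ≤ 2 * D.card := by omega
      _ ≤ k * D.card := Nat.mul_le_mul_right _ hk

/-- For `2 ≤ k` and `2k ≤ n`, the domination number of `F_k(Sₙ)` satisfies
`γ(F_k(Sₙ)) > (1/k) · C(n, k-1)`. -/
theorem domination_token_star_lower (n k : ℕ) (hk : 2 ≤ k) (hkn : 2 * k ≤ n) :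
    (1 / k : ℚ) * (n.choose (k - 1)) < dominationNumber (tokenGraph (starGraph n) k) := by
  classical
  have hne : {m : ℕ | ∃ D : Finset {A : Finset (Fin (n+1)) // A.card = k},
      IsDominatingSet (tokenGraph (starGraph n) k) ↑D ∧ D.card = m}.Nonempty :=
    ⟨_, Finset.univ, fun v => Or.inl (by simp), rfl⟩
  obtain ⟨D, hD, hcard⟩ := Nat.sInf_mem hne
  have hkey := key n k hk (by omega) D hD
  have heq : dominationNumber (tokenGraph (starGraph n) k) = D.card := by
    rw [dominationNumber, ← hcard]
  rw [heq]
  have hkq : (0:ℚ) < k := by exact_mod_cast (by omega : 0 < k)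
  rw [div_mul_eq_mul_div, one_mul, div_lt_iff₀ hkq]
  have : (n.choose (k-1) : ℚ) < k * D.card := by exact_mod_cast hkey
  linarith
end

section
/- Let n, k be integers with 2 ≤ k ≤ n, and let p be a prime dividing k − 1. Let D_1 be the set of all k-element subsets B of {0,1,…,n} such that 0 ∈ B and ∑_{b ∈ B} b ≢ 1 (mod p). Then every k-element subset A of {1,…,n} (i.e., every vertex of F_k(S_n) not containing 0) is adjacent in the k-token graph F_k(S_n) to some vertex of D_1. -/
/-- Let `p` be a prime dividing `k - 1`, and `D₁` the set of vertices `B` of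
`F_k(Sₙ)` with `0 ∈ B` and `∑_{b ∈ B} b ≢ 1 (mod p)`. Then every vertex of
`F_k(Sₙ)` not containing `0` is adjacent to some vertex of `D₁`. -/
theorem vertex_without_center_dominated (n k p : ℕ) (hk : 2 ≤ k) (hkn : k ≤ n)
    (hp : p.Prime) (hpk : p ∣ k - 1)
    (A : {A : Finset (Fin (n + 1)) // A.card = k}) (hA : (0 : Fin (n + 1)) ∉ A.1) :
    ∃ B : {A : Finset (Fin (n + 1)) // A.card = k},
      ((0 : Fin (n + 1)) ∈ B.1 ∧ ¬ ((∑ b ∈ B.1, (b.val : ℤ)) ≡ 1 [ZMOD (p : ℤ)])) ∧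
      (tokenGraph (starGraph n) k).Adj B A := by
  haveI : Fact p.Prime := ⟨hp⟩
  set S : ℤ := ∑ b ∈ A.1, (b.val : ℤ) with hS
  -- find a ∈ A with S - a ≢ 1 mod p
  have hmain : ∃ a ∈ A.1, ¬ ((S - (a.val : ℤ)) ≡ 1 [ZMOD (p : ℤ)]) := by
    by_contra h
    push_neg at h
    have h' : ∀ a ∈ A.1, ((a.val : ZMod p)) = (S : ZMod p) - 1 := by
      intro a ha
      have := h a ha
      rw [Int.ModEq] at this
      have h2 : ((S - (a.val : ℤ) : ℤ) : ZMod p) = ((1 : ℤ) : ZMod p) := by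
        rwa [ZMod.intCast_eq_intCast_iff]
      push_cast at h2
      linear_combination -h2
    have hkcast : ((k : ℕ) : ZMod p) = 1 := by
      have : (k : ℕ) = (k - 1) + 1 := by omega
      rw [this]
      push_cast
      rw [(ZMod.natCast_eq_zero_iff _ _).mpr hpk]
      ring
    have hsum : ((S : ZMod p)) = (S : ZMod p) - 1 := by
      calc ((S : ZMod p)) = ∑ b ∈ A.1, ((b.val : ℤ) : ZMod p) := by
            conv_lhs => rw [hS]
            push_cast
            rfl
        _ = ∑ _b ∈ A.1, ((S : ZMod p) - 1) := Finset.sum_congr rfl (by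
            intro a ha; rw [← h' a ha]; push_cast; ring)
        _ = (S : ZMod p) - 1 := by
            rw [Finset.sum_const, A.2, nsmul_eq_mul, hkcast, one_mul]
    have : (1 : ZMod p) = 0 := by linear_combination hsum
    exact one_ne_zero this
  obtain ⟨a, ha, hne⟩ := hmain
  have ha0 : a ≠ 0 := fun h => hA (h ▸ ha)
  have h0e : (0 : Fin (n+1)) ∉ A.1.erase a := fun h => hA (Finset.mem_of_mem_erase h)
  refine ⟨⟨insert 0 (A.1.erase a), ?_⟩, ⟨Finset.mem_insert_self _ _, ?_⟩, ?_⟩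
  · rw [Finset.card_insert_of_notMem h0e, Finset.card_erase_of_mem ha, A.2]
    omega
  · have : ∑ b ∈ insert (0 : Fin (n+1)) (A.1.erase a), (b.val : ℤ) = S - (a.val : ℤ) := by
      rw [Finset.sum_insert h0e, Finset.sum_erase_eq_sub ha]
      simp [hS]
    rwa [this]
  · refine ⟨0, a, ⟨ha0.symm, Or.inl rfl⟩, ?_⟩
    ext x
    simp only [Finset.mem_symmDiff, Finset.mem_insert, Finset.mem_erase,
      Finset.mem_singleton]
    constructor
    · rintro (⟨(h1 | ⟨h1, h2⟩), h3⟩ | ⟨h1, h2⟩)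
      · exact Or.inl h1
      · exact absurd h2 h3
      · right
        by_contra hxa
        exact h2 (Or.inr ⟨hxa, h1⟩)
    · rintro (rfl | rfl)
      · exact Or.inl ⟨Or.inl rfl, hA⟩
      · exact Or.inr ⟨ha, by rintro (h | ⟨h, _⟩) <;> [exact ha0 h; exact h rfl]⟩
end

section
/- Let n, k be integers with 2 ≤ k ≤ n, let p be a prime, and let N denote the number of (k−1)-element subsets A of {1,…,n} with ∑_{a ∈ A} a ≡ 1 (mod p). Then (1/p − ((p−1)/p)·(k−1)/(n−k+1))·C(n, k−1) ≤ N ≤ (1/p + (k+p−1)/(n−k+1))·C(n, k−1), where C(n, k−1) denotes the binomial coefficient n choose k−1. -/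
open Finset

open Finset

lemma aux_count_bound (n p s : ℕ) (hp0 : 0 < p) :
    ((n : ℚ) + 1) / p - 1 ≤ (((Finset.Icc 1 n).filter (fun x => (x + s) % p = 1 % p)).card : ℚ) ∧
    (((Finset.Icc 1 n).filter (fun x => (x + s) % p = 1 % p)).card : ℚ) ≤ (n : ℚ) / p + 1 := by
  have hpQ : (0:ℚ) < p := by exact_mod_cast hp0
  set v : ℕ := 1 + (p - s % p) with hv
  have hvs : Nat.ModEq p (v + s) 1 := by
    calc v + s ≡ v + s % p [MOD p] := Nat.ModEq.add_left _ (Nat.mod_modEq s p).symm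
    _ = 1 + p := by
        rw [hv, add_assoc, Nat.sub_add_cancel (Nat.mod_lt s hp0).le]
    _ ≡ 1 [MOD p] := by simp [Nat.ModEq, Nat.add_mod]
  have hmod : ∀ x : ℕ, ((x + s) % p = 1 % p) ↔ x ≡ v [MOD p] := by
    intro x
    constructor
    · intro h
      exact (Nat.ModEq.trans h hvs.symm).add_right_cancel' s
    · intro h
      exact (h.add_right s).trans hvs
  have hfilter : (Finset.Icc 1 n).filter (fun x => (x + s) % p = 1 % p)
      = (Finset.Ioc 0 n).filter (fun x => x ≡ v [MOD p]) := by
    rw [← Finset.Icc_add_one_left_eq_Ioc]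
    exact Finset.filter_congr (fun x _ => by simpa using hmod x)
  have hcard := Nat.Ioc_filter_modEq_card 0 n hp0 v
  rw [hfilter]
  set c : ℕ := ((Finset.Ioc 0 n).filter (fun x => x ≡ v [MOD p])).card with hc
  set A : ℚ := (((n:ℕ):ℚ) - v) / p with hA
  set B : ℚ := (((0:ℕ):ℚ) - v) / p with hB
  have hcQ : (c : ℚ) = max ((⌊A⌋ : ℚ) - (⌊B⌋ : ℚ)) 0 := by exact_mod_cast hcard
  have hAB : A = B + (n:ℚ) / p := by rw [hA, hB]; push_cast; field_simp; ring
  constructor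
  · -- lower bound
    obtain ⟨nd, hnd⟩ : ∃ nd : ℕ, nd = n / p := ⟨n / p, rfl⟩
    have hndle : ((nd : ℕ) : ℚ) ≤ (n:ℚ) / p := hnd ▸ Nat.cast_div_le
    have hfl : (⌊B⌋ : ℤ) + (nd : ℤ) ≤ ⌊A⌋ := by
      have h' : B + (((nd : ℤ)) : ℚ) ≤ A := by
        rw [Int.cast_natCast, hAB]; linarith
      have h2 := Int.floor_le_floor h'
      rwa [Int.floor_add_intCast] at h2
    have h1 : ((nd : ℕ) : ℚ) ≤ (c : ℚ) := by
      rw [hcQ]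
      refine le_max_of_le_left ?_
      have h3 := (@Int.cast_le ℚ _ _ _).mpr (show (nd:ℤ) ≤ ⌊A⌋ - ⌊B⌋ by omega)
      rw [Int.cast_sub, Int.cast_natCast] at h3
      linarith
    have h2 : ((n : ℚ) + 1) / p - 1 ≤ ((nd : ℕ) : ℚ) := by
      have hd : p * nd + p ≥ n + 1 := by
        subst hnd
        have h4 := Nat.div_add_mod n p
        have h5 := Nat.mod_lt n hp0
        omega
      have hdQ : (p:ℚ) * ((nd : ℕ) : ℚ) + p ≥ (n:ℚ) + 1 := by exact_mod_cast hd
      rw [div_sub' hpQ.ne', div_le_iff₀ hpQ]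
      nlinarith
    linarith
  · -- upper bound
    rw [hcQ]
    apply max_le
    · have h1 : (⌊A⌋ : ℚ) ≤ A := Int.floor_le A
      have h2 : B - 1 < (⌊B⌋ : ℚ) := Int.sub_one_lt_floor B
      linarith [hAB]
    · positivity

open Finset

lemma aux_double_count (n p m : ℕ) :
    ((((Finset.Icc 1 n).powersetCard (m+1)).filter
        (fun A => (∑ a ∈ A, a) % p = 1 % p)).card) * (m+1)
      = ∑ B ∈ (Finset.Icc 1 n).powersetCard m,
          (((Finset.Icc 1 n) \ B).filter (fun x => (x + ∑ b ∈ B, b) % p = 1 % p)).card := by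
  set S := Finset.Icc 1 n with hS
  set T := (S.powersetCard (m+1)).filter (fun A => (∑ a ∈ A, a) % p = 1 % p) with hT
  have hTcard : ∀ A ∈ T, A.card = m + 1 := fun A hA =>
    (Finset.mem_powersetCard.mp (Finset.mem_filter.mp hA).1).2
  calc T.card * (m+1) = ∑ A ∈ T, A.card := by
        rw [Finset.sum_congr rfl hTcard, Finset.sum_const, smul_eq_mul]
    _ = (T.sigma fun A => A).card := (Finset.card_sigma _ _).symm
    _ = ((S.powersetCard m).sigma fun B =>
          (S \ B).filter (fun x => (x + ∑ b ∈ B, b) % p = 1 % p)).card := by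
        refine Finset.card_bij' (fun x _ => ⟨x.1.erase x.2, x.2⟩)
          (fun y _ => ⟨insert y.2 y.1, y.2⟩) ?_ ?_ ?_ ?_
        · rintro ⟨A, a⟩ hx
          simp only [Finset.mem_sigma, Finset.mem_filter, Finset.mem_powersetCard,
            Finset.mem_sdiff, hT] at hx ⊢
          obtain ⟨⟨⟨hAS, hAcard⟩, hsum⟩, ha⟩ := hx
          refine ⟨⟨(Finset.erase_subset _ _).trans hAS, ?_⟩, ⟨hAS ha, Finset.notMem_erase a A⟩, ?_⟩
          · rw [Finset.card_erase_of_mem ha, hAcard]; omega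
          · rw [Finset.add_sum_erase _ (fun b => b) ha]
            exact hsum
        · rintro ⟨B, x⟩ hy
          simp only [Finset.mem_sigma, Finset.mem_filter, Finset.mem_powersetCard,
            Finset.mem_sdiff, hT] at hy ⊢
          obtain ⟨⟨hBS, hBcard⟩, ⟨hxS, hxB⟩, hcond⟩ := hy
          refine ⟨⟨⟨Finset.insert_subset hxS hBS, ?_⟩, ?_⟩, Finset.mem_insert_self _ _⟩
          · rw [Finset.card_insert_of_notMem hxB, hBcard]
          · rw [Finset.sum_insert hxB]
            exact hcond
        · rintro ⟨A, a⟩ hx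
          have ha : a ∈ A := (Finset.mem_sigma.mp hx).2
          simp [Finset.insert_erase ha]
        · rintro ⟨B, x⟩ hy
          have hxB : x ∉ B := by
            have := (Finset.mem_sigma.mp hy).2
            exact (Finset.mem_sdiff.mp (Finset.mem_filter.mp this).1).2
          simp [Finset.erase_insert hxB]
    _ = ∑ B ∈ S.powersetCard m,
          ((S \ B).filter (fun x => (x + ∑ b ∈ B, b) % p = 1 % p)).card :=
        Finset.card_sigma _ _

lemma alg_low (q d M C NN : ℚ) (hq : 2 ≤ q) (hd : 1 ≤ d) (hM : 1 ≤ M) (hC : 0 ≤ C)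
    (hNN : 0 ≤ NN) (h : C * ((d + M) + 1 - q * M) ≤ q * NN * (d + 1)) :
    (1 / q - ((q - 1) / q) * (M / d)) * C ≤ NN := by
  have hq0 : (0:ℚ) < q := by linarith
  have hd0 : (0:ℚ) < d := by linarith
  have e : (1 / q - ((q - 1) / q) * (M / d)) * C = (d - (q - 1) * M) * C / (q * d) := by
    field_simp
  rw [e, div_le_iff₀ (by positivity)]
  have h7 : (d - (q - 1) * M) * C * (d + 1) ≤ NN * (q * d) * (d + 1) := by
    nlinarith [mul_le_mul_of_nonneg_right h hd0.le,
      mul_nonneg (mul_nonneg hC (by linarith : (0:ℚ) ≤ M)) (by linarith : (0:ℚ) ≤ q - 1)]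
  exact le_of_mul_le_mul_right h7 (by linarith)

lemma alg_up (q d M C NN : ℚ) (hq : 2 ≤ q) (hd : 1 ≤ d) (hM : 1 ≤ M) (hC : 0 ≤ C)
    (hNN : 0 ≤ NN) (h : q * NN * (d + 1) ≤ C * ((d + M) + q)) :
    NN ≤ (1 / q + (M + q) / d) * C := by
  have hq0 : (0:ℚ) < q := by linarith
  have hd0 : (0:ℚ) < d := by linarith
  have e : (1 / q + (M + q) / d) * C = (d + q * (M + q)) * C / (q * d) := by
    rw [div_add_div _ _ hq0.ne' hd0.ne', div_mul_eq_mul_div]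
    congr 1
    ring
  rw [e, le_div_iff₀ (by positivity)]
  have h1 : (0:ℚ) ≤ q * M + q * q - M - q := by nlinarith
  nlinarith [mul_nonneg (mul_nonneg hNN hq0.le) hd0.le, mul_nonneg hC h1,
    mul_nonneg hNN hq0.le]

/-- Bounds on the number `N` of `(k-1)`-element subsets `A` of `{1, …, n}` with
`∑_{a ∈ A} a ≡ 1 (mod p)`:
`(1/p - ((p-1)/p)·(k-1)/(n-k+1))·C(n,k-1) ≤ N ≤ (1/p + (k+p-1)/(n-k+1))·C(n,k-1)`. -/
theorem count_subsets_sum_one_mod (n k p : ℕ) (hk : 2 ≤ k) (hkn : k ≤ n) (hp : p.Prime)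
    (N : ℕ)
    (hN : N = (((Finset.Icc 1 n).powersetCard (k - 1)).filter
      (fun A => (∑ a ∈ A, a) % p = 1 % p)).card) :
    ((1 : ℚ) / p - (((p : ℚ) - 1) / p) * (((k : ℚ) - 1) / ((n : ℚ) - k + 1)))
        * (n.choose (k - 1)) ≤ (N : ℚ) ∧
      (N : ℚ) ≤ ((1 : ℚ) / p + ((k : ℚ) + p - 1) / ((n : ℚ) - k + 1)) * (n.choose (k - 1)) := by
  obtain ⟨m, rfl⟩ : ∃ m, k = m + 2 := ⟨k - 2, by omega⟩
  have hp0 : 0 < p := hp.pos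
  have hq2 : (2:ℚ) ≤ p := by exact_mod_cast hp.two_le
  have hq0 : (0:ℚ) < p := by linarith
  have hmn : m + 2 ≤ n := hkn
  have hmnQ : (m:ℚ) + 2 ≤ n := by exact_mod_cast hmn
  have hidx : m + 2 - 1 = m + 1 := by omega
  rw [hidx] at hN ⊢
  set S := Finset.Icc 1 n with hS
  -- per-B bounds
  have hbound : ∀ B ∈ S.powersetCard m,
      (((n:ℚ)+1)/p - 1 - m
          ≤ (((S \ B).filter (fun x => (x + ∑ b ∈ B, b) % p = 1 % p)).card : ℚ)) ∧
      ((((S \ B).filter (fun x => (x + ∑ b ∈ B, b) % p = 1 % p)).card : ℚ) ≤ (n:ℚ)/p + 1) := by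
    intro B hB
    obtain ⟨hBS, hBcard⟩ := Finset.mem_powersetCard.mp hB
    obtain ⟨hlow, hup⟩ := aux_count_bound n p (∑ b ∈ B, b) hp0
    set F := S.filter (fun x => (x + ∑ b ∈ B, b) % p = 1 % p) with hF
    set G := (S \ B).filter (fun x => (x + ∑ b ∈ B, b) % p = 1 % p) with hG
    have hGF : G ⊆ F := Finset.filter_subset_filter _ Finset.sdiff_subset
    have hFG : F ⊆ G ∪ B := by
      intro x hx
      rcases Finset.mem_filter.mp hx with ⟨hxS, hxc⟩
      by_cases hxB : x ∈ B
      · exact Finset.mem_union_right _ hxB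
      · exact Finset.mem_union_left _
          (Finset.mem_filter.mpr ⟨Finset.mem_sdiff.mpr ⟨hxS, hxB⟩, hxc⟩)
    have h1 : F.card ≤ G.card + m := by
      calc F.card ≤ (G ∪ B).card := Finset.card_le_card hFG
        _ ≤ G.card + B.card := Finset.card_union_le _ _
        _ = G.card + m := by rw [hBcard]
    have h2 : (F.card:ℚ) ≤ (G.card:ℚ) + m := by exact_mod_cast h1
    have h3 : (G.card:ℚ) ≤ (F.card:ℚ) := by exact_mod_cast Finset.card_le_card hGF
    exact ⟨by linarith, by linarith⟩
  -- the double count, in ℚ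
  have key := aux_double_count n p m
  rw [← hN] at key
  have keyQ : (N:ℚ) * ((m:ℚ)+1)
      = ∑ B ∈ S.powersetCard m,
          ((((S \ B).filter (fun x => (x + ∑ b ∈ B, b) % p = 1 % p)).card : ℕ) : ℚ) := by
    have h := congrArg (fun t : ℕ => (t : ℚ)) key
    push_cast at h
    exact h
  have hcardP : (S.powersetCard m).card = n.choose m := by
    rw [Finset.card_powersetCard, hS, Nat.card_Icc]
    norm_num
  set C' : ℚ := (n.choose m : ℚ) with hC'
  have hub : (N:ℚ) * ((m:ℚ)+1) ≤ C' * ((n:ℚ)/p + 1) := by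
    rw [keyQ]
    calc (∑ B ∈ S.powersetCard m, ((((S \ B).filter
            (fun x => (x + ∑ b ∈ B, b) % p = 1 % p)).card : ℕ) : ℚ))
        ≤ ∑ _B ∈ S.powersetCard m, ((n:ℚ)/p + 1) :=
          Finset.sum_le_sum (fun B hB => (hbound B hB).2)
      _ = C' * ((n:ℚ)/p + 1) := by
          rw [Finset.sum_const, hcardP, nsmul_eq_mul]
  have hlb : C' * (((n:ℚ)+1)/p - 1 - m) ≤ (N:ℚ) * ((m:ℚ)+1) := by
    rw [keyQ]
    calc C' * (((n:ℚ)+1)/p - 1 - m)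
        = ∑ _B ∈ S.powersetCard m, (((n:ℚ)+1)/p - 1 - m) := by
          rw [Finset.sum_const, hcardP, nsmul_eq_mul]
      _ ≤ _ := Finset.sum_le_sum (fun B hB => (hbound B hB).1)
  -- choose identity
  set C : ℚ := (n.choose (m+1) : ℚ) with hCdef
  have hCC : C * ((m:ℚ)+1) = C' * ((n:ℚ) - m) := by
    have h := congrArg (fun t : ℕ => (t : ℚ)) (Nat.choose_succ_right_eq n m)
    have hmn' : m ≤ n := by omega
    push_cast [hmn'] at h
    exact h
  have hM0 : (0:ℚ) < (m:ℚ) + 1 := by positivity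
  have hC0 : (0:ℚ) ≤ C := by rw [hCdef]; positivity
  have hN0 : (0:ℚ) ≤ (N:ℚ) := by positivity
  have hnm0 : (0:ℚ) ≤ (n:ℚ) - m := by linarith
  -- lower: C * (n+1 - p*(m+1)) ≤ N * p * (n - m)
  have h6 : C * ((n:ℚ) + 1 - p * ((m:ℚ)+1)) ≤ (N:ℚ) * p * ((n:ℚ) - m) := by
    have s1 : C' * (((n:ℚ)+1) - (p:ℚ) * ((m:ℚ)+1)) ≤ (N:ℚ) * ((m:ℚ)+1) * p := by
      have h := mul_le_mul_of_nonneg_right hlb hq0.le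
      calc C' * (((n:ℚ)+1) - (p:ℚ) * ((m:ℚ)+1))
          = C' * (((n:ℚ)+1)/p - 1 - m) * p := by
            have hdm : ((n:ℚ)+1)/p*p = (n:ℚ)+1 := div_mul_cancel₀ _ hq0.ne'
            linear_combination (-C') * hdm
        _ ≤ (N:ℚ) * ((m:ℚ)+1) * p := h
    have s2 : C * ((m:ℚ)+1) * (((n:ℚ)+1) - (p:ℚ)*((m:ℚ)+1))
        ≤ (N:ℚ) * ((m:ℚ)+1) * p * ((n:ℚ) - m) := by
      rw [hCC]
      calc C' * ((n:ℚ) - m) * (((n:ℚ)+1) - (p:ℚ)*((m:ℚ)+1))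
          = C' * (((n:ℚ)+1) - (p:ℚ)*((m:ℚ)+1)) * ((n:ℚ) - m) := by ring
        _ ≤ ((N:ℚ) * ((m:ℚ)+1) * p) * ((n:ℚ) - m) :=
            mul_le_mul_of_nonneg_right s1 hnm0
        _ = (N:ℚ) * ((m:ℚ)+1) * p * ((n:ℚ) - m) := by ring
    refine le_of_mul_le_mul_right ?_ hM0
    calc C * ((n:ℚ) + 1 - p * ((m:ℚ)+1)) * ((m:ℚ)+1)
        = C * ((m:ℚ)+1) * (((n:ℚ)+1) - (p:ℚ)*((m:ℚ)+1)) := by ring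
      _ ≤ (N:ℚ) * ((m:ℚ)+1) * p * ((n:ℚ) - m) := s2
      _ = (N:ℚ) * p * ((n:ℚ) - m) * ((m:ℚ)+1) := by ring
  -- upper: N * p * (n - m) ≤ C * (n + p)
  have h8 : (N:ℚ) * p * ((n:ℚ) - m) ≤ C * ((n:ℚ) + p) := by
    have s1 : (N:ℚ) * ((m:ℚ)+1) * p ≤ C' * ((n:ℚ) + p) := by
      have h := mul_le_mul_of_nonneg_right hub hq0.le
      calc (N:ℚ) * ((m:ℚ)+1) * p ≤ C' * ((n:ℚ)/p + 1) * p := h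
        _ = C' * ((n:ℚ) + p) := by
            have hdm : (n:ℚ)/p*p = (n:ℚ) := div_mul_cancel₀ _ hq0.ne'
            linear_combination C' * hdm
    refine le_of_mul_le_mul_right ?_ hM0
    calc (N:ℚ) * p * ((n:ℚ) - m) * ((m:ℚ)+1)
        = ((N:ℚ) * ((m:ℚ)+1) * p) * ((n:ℚ) - m) := by ring
      _ ≤ (C' * ((n:ℚ) + p)) * ((n:ℚ) - m) := mul_le_mul_of_nonneg_right s1 hnm0
      _ = (C' * ((n:ℚ) - m)) * ((n:ℚ) + p) := by ring
      _ = C * ((m:ℚ)+1) * ((n:ℚ) + p) := by rw [hCC]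
      _ = C * ((n:ℚ) + p) * ((m:ℚ)+1) := by ring
  have hd1 : (1:ℚ) ≤ (n:ℚ) - (m:ℚ) - 1 := by linarith
  have hM1 : (1:ℚ) ≤ (m:ℚ) + 1 := by
    have := Nat.cast_nonneg (α := ℚ) m
    linarith
  constructor
  · have H := alg_low (p:ℚ) ((n:ℚ) - m - 1) ((m:ℚ)+1) C (N:ℚ) hq2 hd1 hM1 hC0 hN0
      (by linarith [h6])
    refine le_trans (le_of_eq ?_) H
    push_cast
    ring
  · have H := alg_up (p:ℚ) ((n:ℚ) - m - 1) ((m:ℚ)+1) C (N:ℚ) hq2 hd1 hM1 hC0 hN0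
      (by linarith [h8])
    refine le_trans H (le_of_eq ?_)
    push_cast
    ring
end

section
/- For every integer n ≥ 2, the domination number of the 2-token graph of the complete graph satisfies γ(F_2(K_n)) = ⌊n/2⌋. -/
lemma card_symmDiff' {α : Type*} [DecidableEq α] (A B : Finset α) :
    (symmDiff A B).card + 2 * (A ∩ B).card = A.card + B.card := by
  have h1 := Finset.card_sdiff_add_card_inter A B
  have h2 := Finset.card_sdiff_add_card_inter B A
  have h3 : (symmDiff A B).card = (A \ B).card + (B \ A).card := by
    rw [symmDiff_def, Finset.sup_eq_union, Finset.card_union_of_disjoint]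
    exact Finset.disjoint_of_subset_right Finset.sdiff_subset Finset.sdiff_disjoint
  rw [Finset.inter_comm B A] at h2
  omega

lemma tokenAdj_iff {V : Type*} [DecidableEq V] (A B : {A : Finset V // A.card = 2}) :
    (tokenGraph (⊤ : SimpleGraph V) 2).Adj A B ↔ A ≠ B ∧ (A.1 ∩ B.1).Nonempty := by
  have hcd := card_symmDiff' A.1 B.1
  rw [A.2, B.2] at hcd
  constructor
  · rintro ⟨u, v, huv, h⟩
    have huv' : u ≠ v := huv.ne
    have h2 : (symmDiff A.1 B.1).card = 2 := by rw [h]; exact Finset.card_pair huv'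
    constructor
    · intro hAB
      rw [hAB, symmDiff_self] at h2
      simp at h2
    · rw [← Finset.card_pos]; omega
  · rintro ⟨hne, hint⟩
    have hint1 : 1 ≤ (A.1 ∩ B.1).card := Finset.card_pos.mpr hint
    have hint2 : (A.1 ∩ B.1).card ≠ 2 := by
      intro h
      apply hne
      have hsub : A.1 ∩ B.1 = A.1 :=
        Finset.eq_of_subset_of_card_le Finset.inter_subset_left (by rw [h, A.2])
      have hsub' : A.1 ∩ B.1 = B.1 :=
        Finset.eq_of_subset_of_card_le Finset.inter_subset_right (by rw [h, B.2])
      exact Subtype.ext (hsub.symm.trans hsub')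
    have hle : (A.1 ∩ B.1).card ≤ A.1.card := Finset.card_le_card Finset.inter_subset_left
    rw [A.2] at hle
    have h2 : (symmDiff A.1 B.1).card = 2 := by omega
    obtain ⟨u, v, huv, h⟩ := Finset.card_eq_two.mp h2
    exact ⟨u, v, by simpa using huv, h⟩

/-- For every integer `n ≥ 2`, the domination number of the 2-token graph of
the complete graph satisfies `γ(F₂(Kₙ)) = ⌊n/2⌋`. -/
theorem domination_two_token_complete (n : ℕ) (hn : 2 ≤ n) :
    dominationNumber (tokenGraph (⊤ : SimpleGraph (Fin n)) 2) = n / 2 := by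
  set G := tokenGraph (⊤ : SimpleGraph (Fin n)) 2 with hG
  -- the pairing function
  have hbd : ∀ i : Fin (n / 2), 2 * i.val + 1 < n := fun i => by
    have := i.isLt; omega
  set f : Fin (n / 2) → {A : Finset (Fin n) // A.card = 2} :=
    fun i => ⟨{⟨2 * i.val, by have := hbd i; omega⟩, ⟨2 * i.val + 1, hbd i⟩},
      Finset.card_pair (by simp [Fin.ext_iff])⟩ with hf
  have hfval : ∀ (i : Fin (n/2)) (x : Fin n), x ∈ (f i).1 ↔
      x.val = 2 * i.val ∨ x.val = 2 * i.val + 1 := by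
    intro i x
    simp [hf, Fin.ext_iff]
  have hfinj : Function.Injective f := by
    intro i j hij
    have hx : (⟨2 * i.val, by have := hbd i; omega⟩ : Fin n) ∈ (f i).1 := by
      simp [hf]
    rw [hij, hfval] at hx
    have hx' : 2 * i.val = 2 * j.val ∨ 2 * i.val = 2 * j.val + 1 := by simpa using hx
    ext
    omega
  set D : Finset {A : Finset (Fin n) // A.card = 2} := Finset.univ.image f with hD
  have hDcard : D.card = n / 2 := by
    rw [hD, Finset.card_image_of_injective _ hfinj, Finset.card_univ, Fintype.card_fin]
  have hDdom : IsDominatingSet G ↑D := by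
    intro v
    obtain ⟨x, y, hxy, hA⟩ := Finset.card_eq_two.mp v.2
    -- pick the smaller element
    have key : ∃ z : Fin n, z ∈ v.1 ∧ z.val ≤ n - 2 := by
      rcases Nat.lt_or_ge x.val y.val with h | h
      · exact ⟨x, by simp [hA], by have := y.isLt; omega⟩
      · have hne : x.val ≠ y.val := fun h => hxy (Fin.ext h)
        exact ⟨y, by simp [hA], by have := x.isLt; omega⟩
    obtain ⟨z, hz, hz2⟩ := key
    set i : Fin (n / 2) := ⟨z.val / 2, by omega⟩ with hi
    have hiD : f i ∈ D := by simp [hD]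
    have hzfi : z ∈ (f i).1 := by
      rw [hfval]
      simp only [hi]
      omega
    by_cases hveq : v = f i
    · left; rw [hveq]; exact_mod_cast hiD
    · right
      refine ⟨f i, by exact_mod_cast hiD, ?_⟩
      rw [tokenAdj_iff]
      exact ⟨fun h => hveq (h.symm), ⟨z, Finset.mem_inter.mpr ⟨hzfi, hz⟩⟩⟩
  have hub : dominationNumber G ≤ n / 2 :=
    Nat.sInf_le ⟨D, hDdom, hDcard⟩
  have hlb : n / 2 ≤ dominationNumber G := by
    unfold dominationNumber
    refine le_csInf ⟨n / 2, ⟨D, hDdom, hDcard⟩⟩ ?_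
    rintro m ⟨E, hEdom, rfl⟩
    by_contra hlt
    push_neg at hlt
    -- union of pairs in E
    set U : Finset (Fin n) := E.biUnion (fun A => A.1) with hU
    have hUcard : U.card ≤ 2 * E.card := by
      calc U.card ≤ ∑ A ∈ E, A.1.card := Finset.card_biUnion_le
        _ = ∑ A ∈ E, 2 := by
            apply Finset.sum_congr rfl; intro A _; exact A.2
        _ = 2 * E.card := by rw [Finset.sum_const, smul_eq_mul, mul_comm]
    have hcompl : 2 ≤ Uᶜ.card := by
      rw [Finset.card_compl, Fintype.card_fin]
      omega
    obtain ⟨a, ha, b, hb, hab⟩ := Finset.one_lt_card.mp hcompl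
    have hv2 : ({a, b} : Finset (Fin n)).card = 2 := Finset.card_pair hab
    set w : {A : Finset (Fin n) // A.card = 2} := ⟨{a, b}, hv2⟩ with hw
    rcases hEdom w with hmem | ⟨u, huE, hadj⟩
    · have : a ∈ U := Finset.mem_biUnion.mpr ⟨w, by exact_mod_cast hmem, by simp [hw]⟩
      rw [Finset.mem_compl] at ha; exact ha this
    · rw [tokenAdj_iff] at hadj
      obtain ⟨c, hc⟩ := hadj.2
      rw [Finset.mem_inter] at hc
      have hcU : c ∈ U := Finset.mem_biUnion.mpr ⟨u, by exact_mod_cast huE, hc.1⟩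
      have : c = a ∨ c = b := by
        have := hc.2; simp [hw] at this; exact this
      rcases this with rfl | rfl
      · rw [Finset.mem_compl] at ha; exact ha hcU
      · rw [Finset.mem_compl] at hb; exact hb hcU
  omega
end

section
/- Let n ≥ 2 and let D = {A_1, …, A_{⌊n/2⌋}} be a family of ⌊n/2⌋ pairwise disjoint 2-element subsets of {1,…,n}. Then D is a dominating set of the 2-token graph F_2(K_n). -/
/-- A family of `⌊n/2⌋` pairwise disjoint 2-element subsets of `{1, …, n}` is a
dominating set of the 2-token graph `F₂(Kₙ)`. -/
theorem disjoint_pairs_dominating (n : ℕ) (hn : 2 ≤ n)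
    (D : Finset {A : Finset (Fin n) // A.card = 2}) (hcard : D.card = n / 2)
    (hdisj : ∀ A ∈ D, ∀ B ∈ D, A ≠ B → Disjoint A.1 B.1) :
    IsDominatingSet (tokenGraph (⊤ : SimpleGraph (Fin n)) 2) ↑D := by
  intro S
  by_cases hS : S ∈ D
  · left; exact hS
  · right
    by_contra hcon
    push_neg at hcon
    -- every A ∈ D must be disjoint from S
    have hdisjS : ∀ A ∈ D, Disjoint A.1 S.1 := by
      intro A hA
      have hc2 : (A.1 ∩ S.1).card ≤ 2 := by
        calc (A.1 ∩ S.1).card ≤ A.1.card := Finset.card_le_card Finset.inter_subset_left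
        _ = 2 := A.2
      interval_cases h1 : (A.1 ∩ S.1).card
      · rw [Finset.card_eq_zero] at h1
        exact Finset.disjoint_iff_inter_eq_empty.mpr h1
      · -- intersection card 1 : A is adjacent to S, contradicting hcon
        exfalso
        have hA2 : A.1.card = 2 := A.2
        have hS2 : S.1.card = 2 := S.2
        have hAS : (A.1 \ S.1).card = 1 := by
          have h := Finset.card_sdiff_add_card_inter A.1 S.1
          omega
        have hSA : (S.1 \ A.1).card = 1 := by
          have h := Finset.card_sdiff_add_card_inter S.1 A.1
          rw [Finset.inter_comm] at h
          omega
        obtain ⟨a, ha⟩ := Finset.card_eq_one.mp hAS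
        obtain ⟨b, hb⟩ := Finset.card_eq_one.mp hSA
        have hab : a ≠ b := by
          intro h
          have ha' : a ∈ A.1 \ S.1 := ha ▸ Finset.mem_singleton_self a
          have hb' : b ∈ S.1 \ A.1 := hb ▸ Finset.mem_singleton_self b
          rw [Finset.mem_sdiff] at ha' hb'
          exact ha'.2 (h ▸ hb'.1)
        refine hcon A hA ⟨a, b, by simp [hab], ?_⟩
        rw [symmDiff_def, ha, hb, Finset.sup_eq_union]
        ext x; simp
      · -- intersection card 2 : A = S, contradicting hS
        exfalso
        have hIA : A.1 ∩ S.1 = A.1 :=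
          Finset.eq_of_subset_of_card_le Finset.inter_subset_left (by rw [A.2, h1])
        have hIS : A.1 ∩ S.1 = S.1 :=
          Finset.eq_of_subset_of_card_le Finset.inter_subset_right (by rw [S.2, h1])
        exact hS (by rwa [show A = S from Subtype.ext (hIA ▸ hIS)] at hA)
    -- counting argument
    have hcardT : (D.biUnion fun A => A.1).card = 2 * D.card := by
      rw [Finset.card_biUnion (fun A hA B hB hne => hdisj A hA B hB hne)]
      rw [Finset.sum_congr rfl (fun A _ => A.2), Finset.sum_const, smul_eq_mul, mul_comm]
    have hdisjT : Disjoint (D.biUnion fun A => A.1) S.1 :=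
      Finset.disjoint_biUnion_left _ _ _ |>.mpr hdisjS
    have hle : ((D.biUnion fun A => A.1) ∪ S.1).card ≤ n := by
      calc ((D.biUnion fun A => A.1) ∪ S.1).card ≤ (Finset.univ : Finset (Fin n)).card :=
            Finset.card_le_card (Finset.subset_univ _)
        _ = n := by simp
    rw [Finset.card_union_of_disjoint hdisjT, hcardT, hcard, S.2] at hle
    have := Nat.div_add_mod n 2
    omega
end

section
/- Let n ≥ 2 and let X be a set of 2-element subsets of {1,…,n} with |X| < ⌊n/2⌋. Then there exists a 2-element subset B of {1,…,n} with B ∩ A = ∅ for every A ∈ X; consequently X is not a dominating set of the 2-token graph F_2(K_n). -/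
/-- If `X` is a set of fewer than `⌊n/2⌋` vertices of `F₂(Kₙ)`, then some
2-element subset `B` of `{1, …, n}` is disjoint from every member of `X`;
consequently `X` is not a dominating set of `F₂(Kₙ)`. -/
theorem small_set_not_dominating_complete (n : ℕ) (hn : 2 ≤ n)
    (X : Finset {A : Finset (Fin n) // A.card = 2}) (hX : X.card < n / 2) :
    (∃ B : {A : Finset (Fin n) // A.card = 2}, ∀ A ∈ X, B.1 ∩ A.1 = ∅) ∧
    ¬ IsDominatingSet (tokenGraph (⊤ : SimpleGraph (Fin n)) 2) ↑X := by
  classical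
  set U : Finset (Fin n) := X.biUnion (fun A => A.1) with hUdef
  have hUcard : U.card ≤ 2 * X.card := by
    calc U.card ≤ ∑ A ∈ X, A.1.card := Finset.card_biUnion_le
    _ = ∑ _A ∈ X, 2 := Finset.sum_congr rfl (fun A _ => A.2)
    _ = 2 * X.card := by rw [Finset.sum_const]; ring
  have hcompl : 2 ≤ Uᶜ.card := by
    rw [Finset.card_compl, Fintype.card_fin]
    omega
  obtain ⟨B, hBsub, hBcard⟩ := Finset.exists_subset_card_eq hcompl
  have hdisj : ∀ A ∈ X, B ∩ A.1 = ∅ := by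
    intro A hA
    rw [Finset.eq_empty_iff_forall_notMem]
    intro x hx
    have hx1 : x ∈ B := Finset.mem_of_mem_inter_left hx
    have hx2 : x ∈ A.1 := Finset.mem_of_mem_inter_right hx
    have : x ∈ U := Finset.mem_biUnion.2 ⟨A, hA, hx2⟩
    exact (Finset.mem_compl.1 (hBsub hx1)) this
  refine ⟨⟨⟨B, hBcard⟩, hdisj⟩, ?_⟩
  intro hdom
  rcases hdom ⟨B, hBcard⟩ with hmem | ⟨A, hA, u, v, huv, hsd⟩
  · have := hdisj ⟨B, hBcard⟩ hmem
    simp only [Finset.inter_self] at this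
    rw [this] at hBcard
    simp at hBcard
  · have hd : Disjoint A.1 B := by
      rw [Finset.disjoint_iff_inter_eq_empty, Finset.inter_comm]
      exact hdisj A hA
    have hsd4 : (symmDiff A.1 B).card = 4 := by
      rw [symmDiff_def, Finset.sup_eq_union, Finset.card_union_of_disjoint, hd.sdiff_eq_left,
        hd.symm.sdiff_eq_left, A.2, hBcard]
      exact disjoint_sdiff_sdiff
    rw [hsd] at hsd4
    have : ({u, v} : Finset (Fin n)).card ≤ 2 :=
      le_trans (Finset.card_insert_le _ _) (by simp)
    omega
end

section
/- Let n ≥ 3 and let D be a dominating set of the 3-token graph F_3(K_n). Let H be the simple graph on vertex set {1,…,n} whose edges are exactly the 2-element subsets of {1,…,n} that are not contained in any element of D. Then H is triangle-free. -/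
/-- If `D` is a dominating set of `F₃(Kₙ)`, then the graph `H` on `{1, …, n}`
whose edges are the 2-element subsets not contained in any member of `D` is
triangle-free. -/
theorem uncovered_pairs_triangle_free (n : ℕ) (hn : 3 ≤ n)
    (D : Set {A : Finset (Fin n) // A.card = 3})
    (hD : IsDominatingSet (tokenGraph (⊤ : SimpleGraph (Fin n)) 3) D) :
    (SimpleGraph.fromRel
      (fun u v : Fin n => ∀ A ∈ D, ¬ ({u, v} : Finset (Fin n)) ⊆ A.1)).CliqueFree 3 := by
  intro t ht
  rw [SimpleGraph.is3Clique_iff] at ht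
  obtain ⟨u, v, w, huv, huw, hvw, rfl⟩ := ht
  rw [SimpleGraph.fromRel_adj] at huv huw hvw
  obtain ⟨huv_ne, huv_r⟩ := huv
  obtain ⟨huw_ne, huw_r⟩ := huw
  obtain ⟨hvw_ne, hvw_r⟩ := hvw
  have hpair : ∀ B ∈ D, ¬ ({u, v} : Finset (Fin n)) ⊆ B.1 ∧
      ¬ ({u, w} : Finset (Fin n)) ⊆ B.1 ∧ ¬ ({v, w} : Finset (Fin n)) ⊆ B.1 := by
    intro B hB
    refine ⟨?_, ?_, ?_⟩
    · rcases huv_r with h | h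
      · exact h B hB
      · rw [Finset.pair_comm]; exact h B hB
    · rcases huw_r with h | h
      · exact h B hB
      · rw [Finset.pair_comm]; exact h B hB
    · rcases hvw_r with h | h
      · exact h B hB
      · rw [Finset.pair_comm]; exact h B hB
  set A : {A : Finset (Fin n) // A.card = 3} :=
    ⟨{u, v, w}, Finset.card_eq_three.mpr ⟨u, v, w, huv_ne, huw_ne, hvw_ne, rfl⟩⟩ with hA
  rcases hD A with hAD | ⟨B, hB, x, y, hxy, hsd⟩
  · exact (hpair A hAD).1 (by intro z hz; simp [hA] at hz ⊢; tauto)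
  · have hxyne : x ≠ y := hxy.ne
    have hsdcard : (symmDiff B.1 A.1).card = 2 := by
      rw [hsd, Finset.card_insert_of_notMem (by simp [hxyne]), Finset.card_singleton]
    have hdisj : Disjoint (B.1 \ A.1) (A.1 \ B.1) := disjoint_sdiff_sdiff
    have hsd2 : symmDiff B.1 A.1 = (B.1 \ A.1) ∪ (A.1 \ B.1) := by
      rw [symmDiff_def]; rfl
    rw [hsd2, Finset.card_union_of_disjoint hdisj] at hsdcard
    have h1 := Finset.card_sdiff_add_card_inter B.1 A.1
    have h2 := Finset.card_sdiff_add_card_inter A.1 B.1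
    rw [Finset.inter_comm] at h2
    have hBc : B.1.card = 3 := B.2
    have hAc : A.1.card = 3 := A.2
    have hint : (B.1 ∩ A.1).card = 2 := by omega
    obtain ⟨a, b, hab, habeq⟩ := Finset.card_eq_two.mp hint
    have haB : a ∈ B.1 ∧ a ∈ A.1 := by
      have := habeq ▸ (Finset.mem_insert_self a {b}); exact Finset.mem_inter.mp this
    have hbB : b ∈ B.1 ∧ b ∈ A.1 := by
      have : b ∈ B.1 ∩ A.1 := habeq ▸ (by simp)
      exact Finset.mem_inter.mp this
    have hsubB : ({a, b} : Finset (Fin n)) ⊆ B.1 := by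
      intro z hz; simp at hz; rcases hz with rfl | rfl; exacts [haB.1, hbB.1]
    have haA : a = u ∨ a = v ∨ a = w := by
      have := haB.2; simp [hA] at this; tauto
    have hbA : b = u ∨ b = v ∨ b = w := by
      have := hbB.2; simp [hA] at this; tauto
    obtain ⟨hp1, hp2, hp3⟩ := hpair B hB
    rcases haA with rfl | rfl | rfl <;> rcases hbA with rfl | rfl | rfl <;>
      first
        | exact absurd rfl hab
        | exact hp1 hsubB
        | exact hp2 hsubB
        | exact hp3 hsubB
        | exact hp1 (Finset.pair_comm a b ▸ hsubB)
        | exact hp2 (Finset.pair_comm a b ▸ hsubB)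
        | exact hp3 (Finset.pair_comm a b ▸ hsubB)
end

section
/- Let n ≥ 3 and let D be a dominating set of the 3-token graph F_3(K_n). Then 3·|D| + ⌊n²/4⌋ ≥ C(n,2), where C(n,2) denotes the binomial coefficient n choose 2. -/
/-- Mantel's theorem: a triangle-free graph on `N` vertices has at most
`N² / 4` edges. -/
lemma mantel_aux {V : Type*} [Fintype V] [DecidableEq V] (G : SimpleGraph V)
    [DecidableRel G.Adj] (h : G.CliqueFree 3) :
    G.edgeFinset.card ≤ (Fintype.card V) ^ 2 / 4 := by
  cases isEmpty_or_nonempty V with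
  | inl hV =>
    have he : G.edgeFinset = ∅ := Finset.eq_empty_of_isEmpty _
    simp [he]
  | inr hV =>
    obtain ⟨x, -, hx⟩ := Finset.exists_max_image Finset.univ (fun v => G.degree v)
      ⟨Classical.arbitrary V, Finset.mem_univ _⟩
    set Δ := G.degree x with hΔ
    set s : Finset V := Finset.univ \ G.neighborFinset x with hs
    have hsub : G.edgeFinset ⊆ s.biUnion (fun v => G.incidenceFinset v) := by
      intro e he
      induction e with
      | _ a b =>
        rw [SimpleGraph.mem_edgeFinset] at he
        have hab : G.Adj a b := he
        by_cases ha : a ∈ G.neighborFinset x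
        · by_cases hb : b ∈ G.neighborFinset x
          · exfalso
            rw [SimpleGraph.mem_neighborFinset] at ha hb
            exact h {x, a, b} (SimpleGraph.is3Clique_triple_iff.2 ⟨ha, hb, hab⟩)
          · refine Finset.mem_biUnion.2 ⟨b, by simp [hs, hb], ?_⟩
            rw [SimpleGraph.mem_incidenceFinset]
            exact ⟨G.mem_edgeSet.2 hab, Sym2.mem_mk_right a b⟩
        · refine Finset.mem_biUnion.2 ⟨a, by simp [hs, ha], ?_⟩
          rw [SimpleGraph.mem_incidenceFinset]
          exact ⟨G.mem_edgeSet.2 hab, Sym2.mem_mk_left a b⟩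
    have h1 : G.edgeFinset.card ≤ s.card * Δ := by
      calc G.edgeFinset.card ≤ (s.biUnion (fun v => G.incidenceFinset v)).card :=
            Finset.card_le_card hsub
        _ ≤ ∑ v ∈ s, (G.incidenceFinset v).card := Finset.card_biUnion_le
        _ ≤ ∑ v ∈ s, Δ := Finset.sum_le_sum (fun v _ => by
            rw [SimpleGraph.card_incidenceFinset_eq_degree]; exact hx v (Finset.mem_univ v))
        _ = s.card * Δ := by rw [Finset.sum_const, smul_eq_mul]
    have hscard : s.card = Fintype.card V - Δ := by
      rw [hs, Finset.card_sdiff_of_subset (Finset.subset_univ _), Finset.card_univ,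
        SimpleGraph.card_neighborFinset_eq_degree]
    have hΔle : Δ ≤ Fintype.card V := (G.degree_lt_card_verts x).le
    refine h1.trans ?_
    rw [Nat.le_div_iff_mul_le (by norm_num), hscard]
    have hadd : (Fintype.card V - Δ) + Δ = Fintype.card V := Nat.sub_add_cancel hΔle
    set a := Fintype.card V - Δ
    zify [← hadd]
    nlinarith [sq_nonneg ((a : ℤ) - Δ)]

/-- If `D` is a dominating set of `F₃(Kₙ)`, then `3·|D| + ⌊n²/4⌋ ≥ C(n, 2)`. -/
theorem dominating_set_three_token_bound (n : ℕ) (hn : 3 ≤ n)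
    (D : Finset {A : Finset (Fin n) // A.card = 3})
    (hD : IsDominatingSet (tokenGraph (⊤ : SimpleGraph (Fin n)) 3) ↑D) :
    n.choose 2 ≤ 3 * D.card + n ^ 2 / 4 := by
  classical
  set covered : Sym2 (Fin n) → Prop := fun e => ∃ A ∈ D, ∀ x ∈ e, x ∈ A.1 with hcov
  have covsym : ∀ p q : Fin n, covered s(p, q) → covered s(q, p) := by
    rintro p q ⟨A, hA, hall⟩
    exact ⟨A, hA, fun z hz => hall z (by rwa [Sym2.eq_swap])⟩
  let G' : SimpleGraph (Fin n) :=
    { Adj := fun a b => a ≠ b ∧ ¬ covered s(a, b)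
      symm := by
        constructor
        rintro a b ⟨h1, h2⟩
        exact ⟨h1.symm, fun hc => h2 (covsym b a hc)⟩
      loopless := ⟨fun a h => h.1 rfl⟩ }
  haveI : DecidableRel G'.Adj := fun a b => Classical.propDecidable _
  -- G' is triangle-free
  have hcf : G'.CliqueFree 3 := by
    intro t ht
    obtain ⟨u, v, w, huv, huw, hvw, rfl⟩ := Finset.card_eq_three.1 ht.card_eq
    obtain ⟨hadjuv, hadjuw, hadjvw⟩ := SimpleGraph.is3Clique_triple_iff.1 ht
    have hB : ({u, v, w} : Finset (Fin n)).card = 3 := ht.card_eq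
    set Bv : {A : Finset (Fin n) // A.card = 3} := ⟨{u, v, w}, hB⟩ with hBv
    rcases hD Bv with hmem | ⟨A, hA, hadj⟩
    · exact hadjuv.2 ⟨Bv, hmem, fun z hz => by
        rcases Sym2.mem_iff.1 hz with rfl | rfl
        · exact Finset.mem_insert_self _ _
        · exact Finset.mem_insert_of_mem (Finset.mem_insert_self _ _)⟩
    · obtain ⟨x, y, hxy, hsd⟩ := hadj
      have hxyne : x ≠ y := hxy.ne
      have hcard2 : (A.1 ∩ Bv.1).card = 2 := by
        have hdis : Disjoint (A.1 \ Bv.1) (Bv.1 \ A.1) := disjoint_sdiff_sdiff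
        have hsd2 : (A.1 \ Bv.1).card + (Bv.1 \ A.1).card = 2 := by
          rw [← Finset.card_union_of_disjoint hdis]
          have : A.1 \ Bv.1 ∪ Bv.1 \ A.1 = ({x, y} : Finset (Fin n)) := by
            rw [← Finset.sup_eq_union, ← symmDiff_def]; exact hsd
          rw [this, Finset.card_pair hxyne]
        have h1 : (A.1 \ Bv.1).card + (A.1 ∩ Bv.1).card = 3 := by
          rw [Finset.card_sdiff_add_card_inter]; exact A.2
        have h2 : (Bv.1 \ A.1).card + (Bv.1 ∩ A.1).card = 3 := by
          rw [Finset.card_sdiff_add_card_inter]; exact hB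
        rw [Finset.inter_comm] at h2
        omega
      obtain ⟨p, q, hpq, hpair⟩ := Finset.card_eq_two.1 hcard2
      have hpA : p ∈ A.1 ∧ p ∈ ({u, v, w} : Finset (Fin n)) := by
        have : p ∈ A.1 ∩ Bv.1 := hpair ▸ Finset.mem_insert_self _ _
        exact Finset.mem_inter.1 this
      have hqA : q ∈ A.1 ∧ q ∈ ({u, v, w} : Finset (Fin n)) := by
        have : q ∈ A.1 ∩ Bv.1 := hpair ▸ Finset.mem_insert_of_mem (Finset.mem_singleton_self _)
        exact Finset.mem_inter.1 this
      have covpq : covered s(p, q) := ⟨A, hA, fun z hz => by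
        rcases Sym2.mem_iff.1 hz with rfl | rfl
        · exact hpA.1
        · exact hqA.1⟩
      have hpB := hpA.2
      have hqB := hqA.2
      simp only [Finset.mem_insert, Finset.mem_singleton] at hpB hqB
      rcases hpB with rfl | rfl | rfl <;> rcases hqB with rfl | rfl | rfl
      · exact hpq rfl
      · exact hadjuv.2 covpq
      · exact hadjuw.2 covpq
      · exact hadjuv.2 (covsym _ _ covpq)
      · exact hpq rfl
      · exact hadjvw.2 covpq
      · exact hadjuw.2 (covsym _ _ covpq)
      · exact hadjvw.2 (covsym _ _ covpq)
      · exact hpq rfl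
  -- counting
  have htotal : ((⊤ : SimpleGraph (Fin n)).edgeFinset).card = n.choose 2 := by
    rw [SimpleGraph.card_edgeFinset_top_eq_card_choose_two, Fintype.card_fin]
  have hsplit := Finset.card_filter_add_card_filter_not
    (s := (⊤ : SimpleGraph (Fin n)).edgeFinset) (p := covered)
  have hcovered : (((⊤ : SimpleGraph (Fin n)).edgeFinset).filter covered).card ≤ 3 * D.card := by
    have hsub : ((⊤ : SimpleGraph (Fin n)).edgeFinset).filter covered ⊆
        D.biUnion (fun A => A.1.sym2.filter (fun e => ¬ e.IsDiag)) := by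
      intro e he
      rw [Finset.mem_filter] at he
      obtain ⟨he1, A, hA, hAe⟩ := he
      refine Finset.mem_biUnion.2 ⟨A, hA, Finset.mem_filter.2
        ⟨Finset.mem_sym2_iff.2 hAe, ?_⟩⟩
      exact SimpleGraph.not_isDiag_of_mem_edgeSet _ (SimpleGraph.mem_edgeFinset.1 he1)
    have hA3 : ∀ A : {A : Finset (Fin n) // A.card = 3},
        (A.1.sym2.filter (fun e => ¬ e.IsDiag)).card ≤ 3 := by
      intro A
      obtain ⟨a, b, c, hab, hac, hbc, hA⟩ := Finset.card_eq_three.1 A.2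
      have hsub2 : A.1.sym2.filter (fun e => ¬ e.IsDiag) ⊆
          ({s(a, b), s(a, c), s(b, c)} : Finset (Sym2 (Fin n))) := by
        intro e he
        rw [Finset.mem_filter] at he
        obtain ⟨he1, he2⟩ := he
        induction e with
        | _ x y =>
          rw [Finset.mk_mem_sym2_iff, hA] at he1
          have hxyne : x ≠ y := by simpa using he2
          obtain ⟨hx, hy⟩ := he1
          simp only [Finset.mem_insert, Finset.mem_singleton] at hx hy ⊢
          rcases hx with rfl | rfl | rfl <;> rcases hy with rfl | rfl | rfl <;>
            simp_all [Sym2.eq_swap]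
      calc (A.1.sym2.filter (fun e => ¬ e.IsDiag)).card
          ≤ ({s(a, b), s(a, c), s(b, c)} : Finset (Sym2 (Fin n))).card :=
            Finset.card_le_card hsub2
        _ ≤ 3 := (Finset.card_insert_le _ _).trans (Nat.succ_le_succ
            ((Finset.card_insert_le _ _).trans (by simp)))
    calc (((⊤ : SimpleGraph (Fin n)).edgeFinset).filter covered).card
        ≤ (D.biUnion (fun A => A.1.sym2.filter (fun e => ¬ e.IsDiag))).card :=
          Finset.card_le_card hsub
      _ ≤ ∑ A ∈ D, (A.1.sym2.filter (fun e => ¬ e.IsDiag)).card := Finset.card_biUnion_le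
      _ ≤ ∑ _A ∈ D, 3 := Finset.sum_le_sum (fun A _ => hA3 A)
      _ = 3 * D.card := by rw [Finset.sum_const, smul_eq_mul, Nat.mul_comm]
  have huncov : (((⊤ : SimpleGraph (Fin n)).edgeFinset).filter (fun e => ¬ covered e)).card
      ≤ n ^ 2 / 4 := by
    have hsub : ((⊤ : SimpleGraph (Fin n)).edgeFinset).filter (fun e => ¬ covered e) ⊆
        G'.edgeFinset := by
      intro e he
      rw [Finset.mem_filter, SimpleGraph.mem_edgeFinset] at he
      rw [SimpleGraph.mem_edgeFinset]
      induction e with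
      | _ a b =>
        obtain ⟨hadj, hnc⟩ := he
        have hadj' : (⊤ : SimpleGraph (Fin n)).Adj a b := (SimpleGraph.mem_edgeSet _).1 hadj
        exact ⟨hadj'.ne, hnc⟩
    calc (((⊤ : SimpleGraph (Fin n)).edgeFinset).filter (fun e => ¬ covered e)).card
        ≤ G'.edgeFinset.card := Finset.card_le_card hsub
      _ ≤ (Fintype.card (Fin n)) ^ 2 / 4 := mantel_aux G' hcf
      _ = n ^ 2 / 4 := by rw [Fintype.card_fin]
  rw [← htotal, ← hsplit]
  exact Nat.add_le_add hcovered huncov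
end

section
/- Let n ≥ 3. If n is even, then 12·γ(F_3(K_n)) ≥ n² − 2n, i.e., γ(F_3(K_n)) ≥ n²/12 − n/6. If n is odd, then 12·γ(F_3(K_n)) ≥ n² − 2n + 3, i.e., γ(F_3(K_n)) ≥ n²/12 − n/6 + 1/4. -/
open Finset


private lemma sum_card_filter_mem {α β : Type*} [Fintype α] [DecidableEq α]
    (F : Finset β) (f : β → Finset α) :
    ∑ v : α, (F.filter (fun q => v ∈ f q)).card = ∑ q ∈ F, (f q).card := by
  have h : ∀ q : β, ∑ v : α, (if v ∈ f q then (1 : ℕ) else 0) = (f q).card := fun q => by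
    rw [Finset.sum_ite_mem, Finset.univ_inter, Finset.sum_const, smul_eq_mul, mul_one]
  calc ∑ v : α, (F.filter (fun q => v ∈ f q)).card
      = ∑ v : α, ∑ q ∈ F, (if v ∈ f q then 1 else 0) := by
        simp_rw [Finset.card_filter]
    _ = ∑ q ∈ F, ∑ v : α, (if v ∈ f q then 1 else 0) := Finset.sum_comm
    _ = ∑ q ∈ F, (f q).card := Finset.sum_congr rfl fun q _ => h q

private lemma filter_mem_eq_image {n : ℕ} (F : Finset (Finset (Fin n)))
    (hF : ∀ p ∈ F, p.card = 2) (v : Fin n) :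
    F.filter (fun q => v ∈ q) =
      (univ.filter (fun w => w ≠ v ∧ {v, w} ∈ F)).image (fun w => ({v, w} : Finset (Fin n))) := by
  ext p
  simp only [mem_filter, mem_image, mem_univ, true_and]
  constructor
  · rintro ⟨hpF, hvp⟩
    obtain ⟨a, b, hab, rfl⟩ := card_eq_two.1 (hF _ hpF)
    rcases mem_insert.1 hvp with rfl | h
    · exact ⟨b, ⟨Ne.symm hab, hpF⟩, rfl⟩
    · have hb : v = b := mem_singleton.1 h
      subst hb
      refine ⟨a, ⟨hab, ?_⟩, ?_⟩
      · rwa [pair_comm]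
      · rw [pair_comm]
  · rintro ⟨w, ⟨_, hwF⟩, rfl⟩
    exact ⟨hwF, mem_insert_self v {w}⟩

private lemma deg_eq_nbr {n : ℕ} (F : Finset (Finset (Fin n))) (hF : ∀ p ∈ F, p.card = 2)
    (v : Fin n) :
    (F.filter (fun q => v ∈ q)).card =
      (univ.filter (fun w => w ≠ v ∧ {v, w} ∈ F)).card := by
  rw [filter_mem_eq_image F hF v]
  apply card_image_of_injOn
  intro a ha b hb hab
  have hab2 : ({v, a} : Finset (Fin n)) = {v, b} := hab
  have h : a ∈ ({v, b} : Finset (Fin n)) := by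
    rw [← hab2]; exact mem_insert.2 (Or.inr (mem_singleton_self a))
  rcases mem_insert.1 h with h2 | h2
  · exact absurd h2 (mem_filter.1 (Finset.mem_coe.1 ha)).2.1
  · exact mem_singleton.1 h2

private lemma tf_cap {n : ℕ} (H : Finset (Finset (Fin n))) (hH : ∀ p ∈ H, p.card = 2)
    (htf : ∀ u v w : Fin n, u ≠ v → u ≠ w → v ≠ w →
      ({u, v} : Finset (Fin n)) ∈ H → ({u, w} : Finset (Fin n)) ∈ H →
      ({v, w} : Finset (Fin n)) ∈ H → False)
    {p : Finset (Fin n)} (hp : p ∈ H) :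
    ∑ v ∈ p, (H.filter (fun q => v ∈ q)).card ≤ n := by
  obtain ⟨u, v, huv, rfl⟩ := card_eq_two.1 (hH p hp)
  rw [Finset.sum_pair huv, deg_eq_nbr H hH u, deg_eq_nbr H hH v]
  have hdisj : Disjoint (univ.filter (fun w => w ≠ u ∧ ({u, w} : Finset (Fin n)) ∈ H))
      (univ.filter (fun w => w ≠ v ∧ ({v, w} : Finset (Fin n)) ∈ H)) := by
    rw [disjoint_left]
    intro w hw1 hw2
    simp only [mem_filter, mem_univ, true_and] at hw1 hw2
    exact htf u v w huv (Ne.symm hw1.1) (Ne.symm hw2.1) hp hw1.2 hw2.2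
  calc (univ.filter (fun w => w ≠ u ∧ ({u, w} : Finset (Fin n)) ∈ H)).card
        + (univ.filter (fun w => w ≠ v ∧ ({v, w} : Finset (Fin n)) ∈ H)).card
      = ((univ.filter (fun w => w ≠ u ∧ ({u, w} : Finset (Fin n)) ∈ H))
        ∪ (univ.filter (fun w => w ≠ v ∧ ({v, w} : Finset (Fin n)) ∈ H))).card :=
        (card_union_of_disjoint hdisj).symm
    _ ≤ (univ : Finset (Fin n)).card := card_le_card (subset_univ _)
    _ = n := by simp

private lemma mantel_bound {n : ℕ} (H : Finset (Finset (Fin n))) (hH : ∀ p ∈ H, p.card = 2)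
    (c : ℕ) (hcap : ∀ p ∈ H, ∑ v ∈ p, (H.filter (fun q => v ∈ q)).card ≤ c) :
    H.card = 0 ∨ 4 * H.card ≤ n * c := by
  by_cases h0 : H.card = 0
  · exact Or.inl h0
  right
  have h1 : ∑ v : Fin n, (H.filter (fun q => v ∈ q)).card = 2 * H.card := by
    have := sum_card_filter_mem H (id : Finset (Fin n) → Finset (Fin n))
    simp only [id] at this
    rw [this, Finset.sum_congr rfl (fun p hp => hH p hp), Finset.sum_const, smul_eq_mul,
      mul_comm]
  have h2 : ∑ p ∈ H, ∑ v ∈ p, (H.filter (fun q => v ∈ q)).card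
      = ∑ v : Fin n, ((H.filter (fun q => v ∈ q)).card) ^ 2 := by
    calc ∑ p ∈ H, ∑ v ∈ p, (H.filter (fun q => v ∈ q)).card
        = ∑ p ∈ H, ∑ v : Fin n,
            (if v ∈ p then (H.filter (fun q => v ∈ q)).card else 0) := by
          refine Finset.sum_congr rfl fun p _ => ?_
          rw [Finset.sum_ite_mem, Finset.univ_inter]
      _ = ∑ v : Fin n, ∑ p ∈ H,
            (if v ∈ p then (H.filter (fun q => v ∈ q)).card else 0) := Finset.sum_comm
      _ = ∑ v : Fin n, ((H.filter (fun q => v ∈ q)).card) ^ 2 := by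
          refine Finset.sum_congr rfl fun v _ => ?_
          rw [← Finset.sum_filter, Finset.sum_const, smul_eq_mul, sq]
  have h3 : ∑ p ∈ H, ∑ v ∈ p, (H.filter (fun q => v ∈ q)).card ≤ H.card * c := by
    have := Finset.sum_le_card_nsmul H _ c hcap
    simpa [smul_eq_mul] using this
  have hcs := sq_sum_le_card_mul_sum_sq (s := (univ : Finset (Fin n)))
    (f := fun v => ((H.filter (fun q => v ∈ q)).card : ℕ))
  rw [h1, ← h2] at hcs
  have hcs2 : (2 * H.card) ^ 2 ≤ n * (H.card * c) := by
    refine hcs.trans ?_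
    have : ((univ : Finset (Fin n)).card : ℕ) = n := by simp
    rw [this] at *
    exact Nat.mul_le_mul_left n h3
  have key : (4 * H.card) * H.card ≤ (n * c) * H.card := by
    calc (4 * H.card) * H.card = (2 * H.card) ^ 2 := by ring
      _ ≤ n * (H.card * c) := hcs2
      _ = (n * c) * H.card := by ring
  exact Nat.le_of_mul_le_mul_right key (Nat.pos_of_ne_zero h0)


/-- Lower bounds for `γ(F₃(Kₙ))`: if `n` is even then
`12·γ(F₃(Kₙ)) ≥ n² - 2n`, and if `n` is odd then `12·γ(F₃(Kₙ)) ≥ n² - 2n + 3`. -/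
theorem domination_three_token_complete_lower (n : ℕ) (hn : 3 ≤ n) :
    (Even n → n ^ 2 - 2 * n ≤ 12 * dominationNumber (tokenGraph (⊤ : SimpleGraph (Fin n)) 3)) ∧
    (Odd n → n ^ 2 - 2 * n + 3 ≤
      12 * dominationNumber (tokenGraph (⊤ : SimpleGraph (Fin n)) 3)) := by
  classical
  have hne : {k : ℕ | ∃ D : Finset {A : Finset (Fin n) // A.card = 3},
      IsDominatingSet (tokenGraph (⊤ : SimpleGraph (Fin n)) 3) ↑D ∧ D.card = k}.Nonempty :=
    ⟨_, Finset.univ, fun v => Or.inl (Finset.mem_coe.2 (mem_univ v)), rfl⟩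
  obtain ⟨D, hdom, hDcard⟩ := Nat.sInf_mem hne
  have hDval : dominationNumber (tokenGraph (⊤ : SimpleGraph (Fin n)) 3) = D.card :=
    hDcard.symm
  rw [hDval]
  set P : Finset (Finset (Fin n)) :=
    D.biUnion (fun A => A.1.powersetCard 2) with hPdef
  set Pall : Finset (Finset (Fin n)) :=
    (univ : Finset (Fin n)).powersetCard 2 with hPalldef
  have hPsub : P ⊆ Pall := by
    intro p hp
    rw [hPdef, mem_biUnion] at hp
    obtain ⟨A, _, hpA⟩ := hp
    rw [mem_powersetCard] at hpA ⊢
    exact ⟨subset_univ p, hpA.2⟩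
  have hP2 : ∀ p ∈ P, p.card = 2 := fun p hp => (mem_powersetCard.1 (hPsub hp)).2
  have hPallcard : Pall.card = n.choose 2 := by
    rw [hPalldef, card_powersetCard, card_univ, Fintype.card_fin]
  set H : Finset (Finset (Fin n)) := Pall \ P with hHdef
  have hH2 : ∀ p ∈ H, p.card = 2 := fun p hp =>
    (mem_powersetCard.1 (mem_sdiff.1 hp).1).2
  have hPH : P.card + H.card = n.choose 2 := by
    rw [hHdef, card_sdiff_of_subset hPsub, hPallcard]
    have := card_le_card hPsub
    rw [hPallcard] at this
    omega
  have hPcard : P.card ≤ 3 * D.card := by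
    refine card_biUnion_le.trans ?_
    have : ∀ A ∈ D, (A.1.powersetCard 2).card = 3 := by
      intro A _
      rw [card_powersetCard, A.2]
      decide
    rw [Finset.sum_congr rfl this, Finset.sum_const, smul_eq_mul]
    omega
  -- covering property
  have hcover : ∀ B : Finset (Fin n), B.card = 3 → ∃ p ∈ P, p ⊆ B := by
    intro B hB
    rcases hdom ⟨B, hB⟩ with hBD | ⟨A, hAD, hadj⟩
    · obtain ⟨p, hpB, hp2⟩ := Finset.exists_subset_card_eq (show 2 ≤ B.card by omega)
      refine ⟨p, ?_, hpB⟩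
      rw [hPdef, mem_biUnion]
      exact ⟨⟨B, hB⟩, Finset.mem_coe.1 hBD, mem_powersetCard.2 ⟨hpB, hp2⟩⟩
    · obtain ⟨u, v, huv, hsd⟩ := hadj
      have hne2 : u ≠ v := huv.ne
      have hsdc : (symmDiff A.1 B).card = 2 := by
        rw [hsd]; exact card_pair hne2
      have hsplit : (symmDiff A.1 B).card = (A.1 \ B).card + (B \ A.1).card := by
        rw [symmDiff_def, sup_eq_union]
        exact card_union_of_disjoint disjoint_sdiff_sdiff
      have h1 : (A.1 \ B).card + (A.1 ∩ B).card = 3 := by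
        rw [card_sdiff_add_card_inter, A.2]
      have h2 : (B \ A.1).card + (B ∩ A.1).card = 3 := by
        rw [card_sdiff_add_card_inter, hB]
      have hBA : (B ∩ A.1).card = (A.1 ∩ B).card := by rw [inter_comm]
      have hinter : (A.1 ∩ B).card = 2 := by omega
      refine ⟨A.1 ∩ B, ?_, inter_subset_right⟩
      rw [hPdef, mem_biUnion]
      exact ⟨A, Finset.mem_coe.1 hAD, mem_powersetCard.2 ⟨inter_subset_left, hinter⟩⟩
  -- triangle-freeness of H
  have htf : ∀ u v w : Fin n, u ≠ v → u ≠ w → v ≠ w →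
      ({u, v} : Finset (Fin n)) ∈ H → ({u, w} : Finset (Fin n)) ∈ H →
      ({v, w} : Finset (Fin n)) ∈ H → False := by
    intro u v w huv huw hvw h1 h2 h3
    have hnot1 : ({u, v} : Finset (Fin n)) ∉ P := (mem_sdiff.1 h1).2
    have hnot2 : ({u, w} : Finset (Fin n)) ∉ P := (mem_sdiff.1 h2).2
    have hnot3 : ({v, w} : Finset (Fin n)) ∉ P := (mem_sdiff.1 h3).2
    have hBc : ({u, v, w} : Finset (Fin n)).card = 3 := by
      rw [card_insert_of_notMem (by simp [huv, huw]), card_pair hvw]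
    obtain ⟨p, hpP, hpB⟩ := hcover {u, v, w} hBc
    obtain ⟨a, b, hab, rfl⟩ := card_eq_two.1 (hP2 p hpP)
    have ha : a = u ∨ a = v ∨ a = w := by
      have := hpB (mem_insert_self a {b}); simpa using this
    have hb : b = u ∨ b = v ∨ b = w := by
      have := hpB (mem_insert.2 (Or.inr (mem_singleton_self b))); simpa using this
    rcases ha with rfl | rfl | rfl <;> rcases hb with rfl | rfl | rfl
    · exact hab rfl
    · exact hnot1 hpP
    · exact hnot2 hpP
    · rw [pair_comm] at hpP; exact hnot1 hpP
    · exact hab rfl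
    · exact hnot3 hpP
    · rw [pair_comm] at hpP; exact hnot2 hpP
    · rw [pair_comm] at hpP; exact hnot3 hpP
    · exact hab rfl
  have hcapn : ∀ p ∈ H, ∑ v ∈ p, (H.filter (fun q => v ∈ q)).card ≤ n :=
    fun p hp => tf_cap H hH2 htf hp
  have hmb := mantel_bound H hH2 n hcapn
  have h4H : 4 * H.card ≤ n ^ 2 := by
    rcases hmb with h | h
    · rw [h]; positivity
    · rw [sq]; exact h
  have hch : 2 * n.choose 2 + n = n ^ 2 := by
    obtain ⟨k, rfl⟩ : ∃ k, n = k + 1 := ⟨n - 1, by omega⟩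
    rw [Nat.choose_two_right]
    have he : 2 ∣ (k + 1) * k := by
      rcases Nat.even_or_odd k with he | ho
      · exact Dvd.dvd.mul_left he.two_dvd _
      · exact Dvd.dvd.mul_right (Odd.add_one ho).two_dvd _
    rw [Nat.succ_sub_one, Nat.mul_div_cancel' he]
    ring
  constructor
  · intro _
    obtain ⟨c2, hc2⟩ : ∃ c2, n.choose 2 = c2 := ⟨_, rfl⟩
    obtain ⟨q, hq⟩ : ∃ q, n ^ 2 = q := ⟨_, rfl⟩
    rw [hc2] at hPH hch
    rw [hq] at h4H hch ⊢
    omega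
  · intro hodd
    obtain ⟨t, ht⟩ := hodd
    subst ht
    have ht1 : 1 ≤ t := by omega
    obtain ⟨s, hs⟩ : ∃ s, t ^ 2 = s := ⟨_, rfl⟩
    have hq : (2 * t + 1) ^ 2 = 4 * s + 4 * t + 1 := by rw [← hs]; ring
    obtain ⟨c2, hc2⟩ : ∃ c2, (2 * t + 1).choose 2 = c2 := ⟨_, rfl⟩
    rw [hc2] at hPH hch
    rw [hq] at hch h4H ⊢
    by_cases htight : P.card = 3 * D.card ∧ H.card = s + t
    · exfalso
      obtain ⟨hPt, hHt⟩ := htight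
      -- pointwise degree bound
      have hdPle : ∀ v : Fin (2 * t + 1), (P.filter (fun q => v ∈ q)).card
          ≤ 2 * (D.filter (fun A => v ∈ A.1)).card := by
        intro v
        rw [hPdef, filter_biUnion]
        refine card_biUnion_le.trans ?_
        have hb : ∀ A ∈ D, ((A.1.powersetCard 2).filter (fun q => v ∈ q)).card
            ≤ if v ∈ A.1 then 2 else 0 := by
          intro A _
          by_cases hv : v ∈ A.1
          · simp only [hv, if_true]
            rw [deg_eq_nbr _ (fun p hp => (mem_powersetCard.1 hp).2) v]
            have hsub : (univ.filter (fun w => w ≠ v ∧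
                ({v, w} : Finset (Fin (2 * t + 1))) ∈ A.1.powersetCard 2)) ⊆ A.1.erase v := by
              intro w hw
              simp only [mem_filter, mem_univ, true_and, mem_powersetCard] at hw
              exact mem_erase.2 ⟨hw.1, hw.2.1 (mem_insert.2 (Or.inr (mem_singleton_self w)))⟩
            calc (univ.filter (fun w => w ≠ v ∧
                ({v, w} : Finset (Fin (2 * t + 1))) ∈ A.1.powersetCard 2)).card
                ≤ (A.1.erase v).card := card_le_card hsub
              _ = 2 := by rw [card_erase_of_mem hv, A.2]
          · simp only [hv, if_false, Nat.le_zero, card_eq_zero, filter_eq_empty_iff]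
            intro q hq2 hvq
            exact hv ((mem_powersetCard.1 hq2).1 hvq)
        calc ∑ A ∈ D, ((A.1.powersetCard 2).filter (fun q => v ∈ q)).card
            ≤ ∑ A ∈ D, (if v ∈ A.1 then 2 else 0) := Finset.sum_le_sum hb
          _ = 2 * (D.filter (fun A => v ∈ A.1)).card := by
              rw [Finset.sum_ite, Finset.sum_const, Finset.sum_const]
              simp [mul_comm]
      -- sum equalities
      have hsumP : ∑ v : Fin (2 * t + 1), (P.filter (fun q => v ∈ q)).card = 2 * P.card := by
        have h := sum_card_filter_mem P (id : Finset (Fin (2 * t + 1)) → Finset (Fin (2 * t + 1)))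
        simp only [id] at h
        rw [h, Finset.sum_congr rfl hP2, Finset.sum_const, smul_eq_mul, mul_comm]
      have hsumD : ∑ v : Fin (2 * t + 1), (D.filter (fun A => v ∈ A.1)).card = 3 * D.card := by
        have h := sum_card_filter_mem D (fun A => A.1)
        rw [h, Finset.sum_congr rfl (fun A _ => A.2), Finset.sum_const, smul_eq_mul, mul_comm]
      have heq : ∀ v ∈ (univ : Finset (Fin (2 * t + 1))), (P.filter (fun q => v ∈ q)).card
          = 2 * (D.filter (fun A => v ∈ A.1)).card := by
        refine (Finset.sum_eq_sum_iff_of_le (fun v _ => hdPle v)).1 ?_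
        rw [hsumP]
        rw [← Finset.mul_sum, hsumD]
        omega
      -- degrees in Pall
      have hPall2 : ∀ p ∈ Pall, p.card = 2 := fun p hp => (mem_powersetCard.1 hp).2
      have hall : ∀ v : Fin (2 * t + 1), (Pall.filter (fun q => v ∈ q)).card = 2 * t := by
        intro v
        rw [deg_eq_nbr Pall hPall2 v]
        have hset : (univ.filter (fun w => w ≠ v ∧
            ({v, w} : Finset (Fin (2 * t + 1))) ∈ Pall)) = univ.erase v := by
          ext w
          simp only [mem_filter, mem_univ, true_and, mem_erase, and_true]
          constructor
          · exact fun h => h.1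
          · intro hwv
            refine ⟨hwv, ?_⟩
            rw [hPalldef, mem_powersetCard]
            exact ⟨subset_univ _, card_pair (Ne.symm hwv)⟩
        rw [hset, card_erase_of_mem (mem_univ v), card_univ, Fintype.card_fin]
        omega
      have hsplitv : ∀ v : Fin (2 * t + 1), (P.filter (fun q => v ∈ q)).card
          + (H.filter (fun q => v ∈ q)).card = 2 * t := by
        intro v
        have hfe : H.filter (fun q => v ∈ q)
            = Pall.filter (fun q => v ∈ q) \ P.filter (fun q => v ∈ q) := by
          ext q
          rw [hHdef]
          simp only [mem_filter, mem_sdiff]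
          tauto
        have hss : P.filter (fun q => v ∈ q) ⊆ Pall.filter (fun q => v ∈ q) :=
          filter_subset_filter _ hPsub
        have hcle := card_le_card hss
        rw [hfe, card_sdiff_of_subset hss]
        have := hall v
        omega
      have heven : ∀ v : Fin (2 * t + 1), ∃ k, (H.filter (fun q => v ∈ q)).card = 2 * k := by
        intro v
        have h1 := hsplitv v
        have h2 := heq v (mem_univ v)
        exact ⟨t - (D.filter (fun A => v ∈ A.1)).card, by omega⟩
      have hcap2 : ∀ p ∈ H, ∑ v ∈ p, (H.filter (fun q => v ∈ q)).card ≤ 2 * t := by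
        intro p hp
        have hcn := hcapn p hp
        obtain ⟨u, v, huv, rfl⟩ := card_eq_two.1 (hH2 p hp)
        rw [Finset.sum_pair huv] at hcn ⊢
        obtain ⟨x, hx⟩ := heven u
        obtain ⟨y, hy⟩ := heven v
        omega
      have hmb2 := mantel_bound H hH2 (2 * t) hcap2
      have hs1 : 1 ≤ s := by
        have : 1 ≤ t ^ 2 := Nat.one_le_pow _ _ (by omega)
        omega
      have hnn : (2 * t + 1) * (2 * t) = 4 * s + 2 * t := by rw [← hs]; ring
      rcases hmb2 with h | h
      · omega
      · rw [hnn] at h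
        omega
    · omega
end

section
/- Let n ≥ 6 be an integer with n ≡ 2 (mod 12) or n ≡ 6 (mod 12). Then the domination number of the 3-token graph of the complete graph satisfies γ(F_3(K_n)) = n²/12 − n/6, i.e., 12·γ(F_3(K_n)) = n² − 2n. -/
set_option maxHeartbeats 1600000

open Finset

lemma two_mul_choose_two (n : ℕ) : 2 * n.choose 2 = n * (n - 1) := by
  induction n with
  | zero => simp
  | succ k ih =>
    rw [Nat.choose_succ_succ, Nat.choose_one_right, Nat.mul_add, ih]
    rcases k with _ | k
    · simp
    · simp only [Nat.succ_sub_one]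
      ring

lemma two_mul_card_filter_lt {α : Type*} [Fintype α] [DecidableEq α] (f : α → ℕ)
    (hf : Function.Injective f) :
    2 * ((Finset.univ ×ˢ Finset.univ).filter fun p : α × α => f p.1 < f p.2).card
      = Fintype.card α * (Fintype.card α - 1) := by
  classical
  set L := (Finset.univ ×ˢ Finset.univ).filter fun p : α × α => f p.1 < f p.2 with hL
  set G := (Finset.univ ×ˢ Finset.univ).filter fun p : α × α => f p.2 < f p.1 with hG
  have hcard : L.card = G.card := by
    apply Finset.card_bij (fun p _ => p.swap)
    · rintro ⟨a, b⟩ hp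
      simp only [hL, hG, Finset.mem_filter] at hp ⊢
      exact ⟨by simp, hp.2⟩
    · rintro ⟨a, b⟩ _ ⟨c, d⟩ _ h
      simpa [Prod.ext_iff, and_comm] using h
    · rintro ⟨a, b⟩ hp
      refine ⟨⟨b, a⟩, ?_, rfl⟩
      simp only [hL, hG, Finset.mem_filter] at hp ⊢
      exact ⟨by simp, hp.2⟩
  have hdisj : Disjoint L G := by
    rw [Finset.disjoint_filter]
    intro p _ h1
    omega
  have hunion : L ∪ G = (Finset.univ : Finset α).offDiag := by
    ext ⟨a, b⟩
    simp only [Finset.mem_union, hL, hG, Finset.mem_filter, Finset.mem_offDiag,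
      Finset.mem_univ, Finset.mem_product, true_and, and_true]
    constructor
    · rintro (h | h) <;> exact fun hab => by subst hab; omega
    · intro hab
      rcases Nat.lt_trichotomy (f a) (f b) with h | h | h
      · exact Or.inl h
      · exact absurd (hf h) hab
      · exact Or.inr h
  have hdu := Finset.card_union_of_disjoint hdisj
  rw [hunion, Finset.offDiag_card, ← hcard, Finset.card_univ] at hdu
  have h2L : 2 * L.card = Fintype.card α * Fintype.card α - Fintype.card α := by omega
  rw [h2L]
  generalize Fintype.card α = c
  rcases c with _ | q
  · simp
  · have : (q+1)*(q+1) = (q+1)*q + (q+1) := by ring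
    simp only [Nat.succ_sub_one]
    omega

/-- Mantel-type bound. -/
lemma mantel_finset {α : Type*} [Fintype α] [DecidableEq α] (U : Finset (Finset α))
    (h2 : ∀ p ∈ U, p.card = 2)
    (htf : ∀ a b c : α, a ≠ b → a ≠ c → b ≠ c →
      ({a, b} : Finset α) ∈ U → ({a, c} : Finset α) ∈ U → ({b, c} : Finset α) ∈ U → False) :
    4 * U.card ≤ (Fintype.card α) ^ 2 := by
  classical
  rcases U.eq_empty_or_nonempty with rfl | hU
  · simp
  obtain ⟨p₀, hp₀⟩ := hU
  have hp₀2 := h2 p₀ hp₀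
  have : p₀.Nonempty := Finset.card_pos.mp (by omega)
  obtain ⟨x₀, hx₀⟩ := this
  have huniv : (Finset.univ : Finset α).Nonempty := ⟨x₀, Finset.mem_univ x₀⟩
  set deg : α → ℕ := fun v => (U.filter fun p => v ∈ p).card with hdeg
  obtain ⟨v₀, -, hmax⟩ := Finset.exists_max_image Finset.univ deg huniv
  set N := Finset.univ.filter fun u => u ≠ v₀ ∧ ({v₀, u} : Finset α) ∈ U with hN
  have hNcard : N.card = deg v₀ := by
    apply Finset.card_bij (fun u _ => ({v₀, u} : Finset α))
    · intro u hu
      simp only [hN, Finset.mem_filter] at hu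
      simp only [hdeg, Finset.mem_filter]
      exact ⟨hu.2.2, by simp⟩
    · intro u hu u' hu' h
      simp only [hN, Finset.mem_filter] at hu hu'
      have : u ∈ ({v₀, u'} : Finset α) := h ▸ (by simp : u ∈ ({v₀, u} : Finset α))
      simp only [Finset.mem_insert, Finset.mem_singleton] at this
      rcases this with h | h
      · exact absurd h hu.2.1
      · exact h
    · intro p hp
      simp only [hdeg, Finset.mem_filter] at hp
      obtain ⟨hpU, hvp⟩ := hp
      obtain ⟨a, b, hab, rfl⟩ := Finset.card_eq_two.mp (h2 _ hpU)
      simp only [Finset.mem_insert, Finset.mem_singleton] at hvp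
      rcases hvp with rfl | rfl
      · refine ⟨b, ?_, rfl⟩
        simp only [hN, Finset.mem_filter]
        exact ⟨Finset.mem_univ b, Ne.symm hab, hpU⟩
      · refine ⟨a, ?_, Finset.pair_comm v₀ a⟩
        simp only [hN, Finset.mem_filter]
        exact ⟨Finset.mem_univ a, hab, by rw [Finset.pair_comm]; exact hpU⟩
  have hNind : ∀ u ∈ N, ∀ w ∈ N, u ≠ w → ({u, w} : Finset α) ∉ U := by
    intro u hu w hw huw hmem
    simp only [hN, Finset.mem_filter] at hu hw
    exact htf v₀ u w (Ne.symm hu.2.1) (Ne.symm hw.2.1) huw hu.2.2 hw.2.2 hmem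
  have hsub : U ⊆ (Finset.univ \ N).biUnion fun v => U.filter fun p => v ∈ p := by
    intro p hp
    obtain ⟨a, b, hab, rfl⟩ := Finset.card_eq_two.mp (h2 p hp)
    have : a ∉ N ∨ b ∉ N := by
      by_contra h
      push_neg at h
      exact hNind a h.1 b h.2 hab hp
    rcases this with h | h
    · exact Finset.mem_biUnion.mpr ⟨a, Finset.mem_sdiff.mpr ⟨Finset.mem_univ a, h⟩,
        Finset.mem_filter.mpr ⟨hp, by simp⟩⟩
    · exact Finset.mem_biUnion.mpr ⟨b, Finset.mem_sdiff.mpr ⟨Finset.mem_univ b, h⟩,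
        Finset.mem_filter.mpr ⟨hp, by simp⟩⟩
  have hUle : U.card ≤ (Finset.univ \ N).card * deg v₀ := by
    calc U.card ≤ ((Finset.univ \ N).biUnion fun v => U.filter fun p => v ∈ p).card :=
        Finset.card_le_card hsub
      _ ≤ ∑ v ∈ Finset.univ \ N, (U.filter fun p => v ∈ p).card := Finset.card_biUnion_le
      _ ≤ ∑ _v ∈ Finset.univ \ N, deg v₀ :=
          Finset.sum_le_sum fun v _ => hmax v (Finset.mem_univ v)
      _ = (Finset.univ \ N).card * deg v₀ := by rw [Finset.sum_const, smul_eq_mul]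
  have hNle : N.card ≤ Fintype.card α :=
    (Finset.card_le_card (Finset.subset_univ N)).trans_eq Finset.card_univ
  have hcompl : (Finset.univ \ N).card = Fintype.card α - N.card := by
    rw [Finset.card_sdiff_of_subset (Finset.subset_univ N), Finset.card_univ]
  set q := Fintype.card α
  set Δ := deg v₀ with hΔ
  rw [hcompl, hNcard] at hUle
  rw [hNcard] at hNle
  obtain ⟨k, hk⟩ : ∃ k, q = Δ + k := ⟨q - Δ, by omega⟩
  have hqd : q - Δ = k := by omega
  rw [hqd] at hUle
  have key : 4 * (k * Δ) ≤ (Δ + k) ^ 2 := by nlinarith [two_mul_le_add_sq Δ k]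
  calc 4 * U.card ≤ 4 * (k * Δ) := by omega
    _ ≤ (Δ + k) ^ 2 := key
    _ = q ^ 2 := by rw [hk]


/-- From two distinct 3-sets sharing two elements, get the symmDiff pair. -/
lemma symmDiff_pair_of_shared {α : Type*} [DecidableEq α] (s T : Finset α)
    (hs : s.card = 3) (hT : T.card = 3) (hne : s ≠ T) {x y : α} (hxy : x ≠ y)
    (hxs : x ∈ s) (hys : y ∈ s) (hxT : x ∈ T) (hyT : y ∈ T) :
    ∃ u v : α, u ≠ v ∧ symmDiff s T = {u, v} := by
  have hpair : ({x, y} : Finset α) ⊆ s ∩ T := by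
    intro z hz
    simp only [Finset.mem_insert, Finset.mem_singleton] at hz
    rcases hz with rfl | rfl <;> simp [Finset.mem_inter, *]
  have h2 : 2 ≤ (s ∩ T).card := by
    have := Finset.card_le_card hpair
    rwa [Finset.card_pair hxy] at this
  have h3 : (s ∩ T).card ≤ 3 := by
    have := Finset.card_le_card (Finset.inter_subset_left (s₁ := s) (s₂ := T))
    omega
  have hI : (s ∩ T).card = 2 := by
    rcases Nat.lt_or_ge (s ∩ T).card 3 with h | h
    · omega
    · exfalso
      have hIs : s ∩ T = s := Finset.eq_of_subset_of_card_le Finset.inter_subset_left (by omega)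
      have hIT : s ∩ T = T := Finset.eq_of_subset_of_card_le Finset.inter_subset_right (by omega)
      exact hne (hIs ▸ hIT)
  have hsdT : (s \ T).card = 1 := by
    have := Finset.card_inter_add_card_sdiff s T
    omega
  have hTds : (T \ s).card = 1 := by
    have := Finset.card_inter_add_card_sdiff T s
    rw [Finset.inter_comm] at this
    omega
  obtain ⟨u, hu⟩ := Finset.card_eq_one.mp hsdT
  obtain ⟨v, hv⟩ := Finset.card_eq_one.mp hTds
  refine ⟨u, v, ?_, ?_⟩
  · have hu' : u ∈ s \ T := hu ▸ Finset.mem_singleton_self u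
    have hv' : v ∈ T \ s := hv ▸ Finset.mem_singleton_self v
    rw [Finset.mem_sdiff] at hu' hv'
    intro h
    exact hu'.2 (h ▸ hv'.1)
  · rw [symmDiff_def]
    show s \ T ∪ T \ s = {u, v}
    rw [hu, hv, Finset.insert_eq]

/-- Conversely: symmDiff being a pair gives a shared 2-subset. -/
lemma shared_pair_of_symmDiff {α : Type*} [DecidableEq α] (s T : Finset α)
    (hs : s.card = 3) (hT : T.card = 3) {u v : α} (huv : u ≠ v)
    (h : symmDiff s T = {u, v}) : (s ∩ T).card = 2 := by
  have hd : s \ T ∪ T \ s = {u, v} := by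
    rw [← h, symmDiff_def]; rfl
  have hdisj : Disjoint (s \ T) (T \ s) := disjoint_sdiff_sdiff
  have hcard2 : (s \ T).card + (T \ s).card = 2 := by
    rw [← Finset.card_union_of_disjoint hdisj, hd, Finset.card_pair huv]
  have e1 := Finset.card_inter_add_card_sdiff s T
  have e2 := Finset.card_inter_add_card_sdiff T s
  rw [Finset.inter_comm] at e2
  omega

/-- Transfer a covering triple family along an equivalence. -/
lemma cover_transfer {W V : Type*} [DecidableEq W] [DecidableEq V] (e : W ≃ V)
    (S : Finset (Finset W)) (h3 : ∀ s ∈ S, s.card = 3)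
    (hcov : ∀ x y : W, x ≠ y → ∃ s ∈ S, x ∈ s ∧ y ∈ s) :
    ∃ S' : Finset (Finset V), S'.card ≤ S.card ∧ (∀ s ∈ S', s.card = 3) ∧
      ∀ x y : V, x ≠ y → ∃ s ∈ S', x ∈ s ∧ y ∈ s := by
  refine ⟨S.image (Finset.image e), Finset.card_image_le, ?_, ?_⟩
  · intro s hs
    obtain ⟨t, ht, rfl⟩ := Finset.mem_image.mp hs
    rw [Finset.card_image_of_injective t e.injective]
    exact h3 t ht
  · intro x y hxy
    obtain ⟨s, hs, hx, hy⟩ := hcov (e.symm x) (e.symm y) (fun h => hxy (by simpa using congrArg e h))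
    refine ⟨s.image e, Finset.mem_image_of_mem _ hs, ?_, ?_⟩
    · have := Finset.mem_image_of_mem e hx
      simpa using this
    · have := Finset.mem_image_of_mem e hy
      simpa using this


def hnatF (t s : ℕ) : ℕ := if s % 2 = 0 then s / 2 else s / 2 + t

def hinvF (t k : ℕ) : ℕ := if k < t then 2 * k else 2 * (k - t) + 1

lemma hnatF_lt (t s : ℕ) (ht : 1 ≤ t) (hs : s < 2 * t) : hnatF t s < 2 * t := by
  unfold hnatF; split <;> omega

lemma hinvF_lt (t k : ℕ) (hk : k < 2 * t) : hinvF t k < 2 * t := by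
  unfold hinvF; split <;> omega

lemma hnatF_hinvF (t k : ℕ) (hk : k < 2 * t) : hnatF t (hinvF t k) = k := by
  unfold hinvF
  rcases Nat.lt_or_ge k t with h | h
  · rw [if_pos h]
    unfold hnatF
    rw [if_pos (by omega)]
    omega
  · rw [if_neg (by omega)]
    unfold hnatF
    rw [if_neg (by omega)]
    omega

def opvF (t : ℕ) (ht : 1 ≤ t) (x y : Fin (2 * t)) : Fin (2 * t) :=
  ⟨hnatF t ((x.val + y.val) % (2 * t)), hnatF_lt t _ ht (Nat.mod_lt _ (by omega))⟩

lemma opvF_comm (t : ℕ) (ht : 1 ≤ t) (x y : Fin (2 * t)) :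
    opvF t ht x y = opvF t ht y x := by
  simp [opvF, Nat.add_comm]

lemma opvF_self_val (t : ℕ) (ht : 1 ≤ t) (x : Fin (2 * t)) :
    (opvF t ht x x).val = if x.val < t then x.val else x.val - t := by
  have hx := x.isLt
  rcases Nat.lt_or_ge x.val t with h | h
  · have hm : (x.val + x.val) % (2 * t) = x.val + x.val := Nat.mod_eq_of_lt (by omega)
    rw [if_pos h]
    simp only [opvF, hnatF, hm]
    split <;> omega
  · have hm : (x.val + x.val) % (2 * t) = x.val + x.val - 2 * t := by
      rw [Nat.mod_eq_sub_mod (by omega)]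
      exact Nat.mod_eq_of_lt (by omega)
    rw [if_neg (Nat.not_lt.mpr h)]
    simp only [opvF, hnatF, hm]
    split <;> omega

lemma opvF_solve (t : ℕ) (ht : 1 ≤ t) (x y : Fin (2 * t)) :
    ∃ z : Fin (2 * t), opvF t ht x z = y := by
  refine ⟨⟨(hinvF t y.val + (2 * t - x.val)) % (2 * t), Nat.mod_lt _ (by omega)⟩, ?_⟩
  apply Fin.ext
  show hnatF t ((x.val + (hinvF t y.val + (2 * t - x.val)) % (2 * t)) % (2 * t)) = y.val
  have hhy : hinvF t y.val < 2 * t := hinvF_lt t _ y.isLt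
  have hx : x.val ≤ 2 * t := le_of_lt x.isLt
  have h1 : (x.val + (hinvF t y.val + (2 * t - x.val)) % (2 * t)) % (2 * t)
      = (x.val + (hinvF t y.val + (2 * t - x.val))) % (2 * t) := Nat.add_mod_mod _ _ _
  have h2 : x.val + (hinvF t y.val + (2 * t - x.val)) = hinvF t y.val + 2 * t := by omega
  rw [h1, h2, Nat.add_mod_right, Nat.mod_eq_of_lt hhy]
  exact hnatF_hinvF t y.val y.isLt

/-- Skolem construction: covering triple system for `m = 6t+1`, `t ≥ 1`. -/
lemma sts_case1 (t : ℕ) (ht : 1 ≤ t) :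
    ∃ S : Finset (Finset (Option (Fin (2*t) × Fin 3))),
      6 * S.card ≤ (6*t+1) * (6*t+1-1) ∧ (∀ s ∈ S, s.card = 3) ∧
      ∀ x y : Option (Fin (2*t) × Fin 3), x ≠ y → ∃ s ∈ S, x ∈ s ∧ y ∈ s := by
  set V := Option (Fin (2*t) × Fin 3) with hV
  set B1 : Finset (Finset V) :=
    ((Finset.univ : Finset (Fin (2*t))).filter (fun x => x.val < t)).image
      (fun x => ({some (x,0), some (x,1), some (x,2)} : Finset V)) with hB1def
  set Binf : Finset (Finset V) :=
    (((Finset.univ : Finset (Fin (2*t))).filter (fun x => t ≤ x.val)) ×ˢ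
        (Finset.univ : Finset (Fin 3))).image
      (fun w => ({none, some (w.1, w.2),
        some (⟨w.1.val - t, lt_of_le_of_lt (Nat.sub_le _ _) w.1.isLt⟩, w.2 + 1)} :
        Finset V)) with hBinfdef
  set P : Finset (Fin (2*t) × Fin (2*t)) :=
    (Finset.univ ×ˢ Finset.univ).filter (fun p => p.1.val < p.2.val) with hPdef
  set B2 : Finset (Finset V) :=
    (P ×ˢ (Finset.univ : Finset (Fin 3))).image
      (fun w => ({some (w.1.1, w.2), some (w.1.2, w.2),
        some (opvF t ht w.1.1 w.1.2, w.2 + 1)} : Finset V)) with hB2def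
  set S := B1 ∪ Binf ∪ B2 with hSdef
  have hki : ∀ k : Fin 3, k + 1 ≠ k := by decide
  refine ⟨S, ?_, ?_, ?_⟩
  · -- counting
    have hB1c : B1.card ≤ t := by
      refine le_trans Finset.card_image_le ?_
      have : ((Finset.univ : Finset (Fin (2*t))).filter (fun x => x.val < t)).card
          ≤ (Finset.range t).card := by
        apply Finset.card_le_card_of_injOn (fun x => x.val)
        · intro x hx
          rw [Finset.mem_coe, Finset.mem_filter] at hx
          exact Finset.mem_range.mpr hx.2
        · intro x _ y _ h
          exact Fin.ext h
      simpa using this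
    have hBinfc : Binf.card ≤ t * 3 := by
      refine le_trans Finset.card_image_le ?_
      rw [Finset.card_product, Finset.card_univ, Fintype.card_fin]
      have : ((Finset.univ : Finset (Fin (2*t))).filter (fun x => t ≤ x.val)).card
          ≤ (Finset.range t).card := by
        apply Finset.card_le_card_of_injOn (fun x => x.val - t)
        · intro x hx
          rw [Finset.mem_coe, Finset.mem_filter] at hx
          have := x.isLt
          exact Finset.mem_range.mpr (show x.val - t < t by omega)
        · intro x hx y hy h
          simp only [Finset.coe_filter, Set.mem_setOf_eq, Finset.mem_univ, true_and] at hx hy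
          simp only at h
          apply Fin.ext
          omega
      rw [Finset.card_range] at this
      omega
    have h2P : 2 * P.card = 2*t * (2*t - 1) := by
      have h := two_mul_card_filter_lt (Fin.val (n := 2*t)) (Fin.val_injective)
      rw [Fintype.card_fin] at h
      rw [hPdef, h]
    have hB2c : B2.card ≤ P.card * 3 := by
      refine le_trans Finset.card_image_le ?_
      rw [Finset.card_product, Finset.card_univ, Fintype.card_fin]
    have hSc : S.card ≤ B1.card + Binf.card + B2.card :=
      le_trans (Finset.card_union_le _ _)
        (Nat.add_le_add_right (Finset.card_union_le _ _) _)
    obtain ⟨t', rfl⟩ : ∃ t', t = t' + 1 := ⟨t - 1, by omega⟩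
    have hs1 : 6*(t'+1)+1-1 = 6*(t'+1) := by omega
    have hs2 : 2*(t'+1)-1 = 2*t'+1 := by omega
    rw [hs2] at h2P
    have hre : 2*(t'+1) * (2*t'+1) = 2*((t'+1)*(2*t'+1)) := by ring
    rw [hre] at h2P
    have hexp : (6*(t'+1)+1) * (6*(t'+1)) = 24*(t'+1) + 9*(2*((t'+1)*(2*t'+1))) := by ring
    rw [hs1, hexp]
    omega
  · -- card 3
    intro s hs
    rw [hSdef, Finset.mem_union, Finset.mem_union] at hs
    have hsome2 : ∀ (x y : Fin (2*t)) (i j : Fin 3),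
        (some (x,i) : V) = some (y,j) → x = y ∧ i = j := by
      intro x y i j h
      have h2 := Option.some.inj h
      exact ⟨congrArg Prod.fst h2, congrArg Prod.snd h2⟩
    rcases hs with (hs | hs) | hs
    · obtain ⟨x, -, rfl⟩ := Finset.mem_image.mp hs
      refine Finset.card_eq_three.mpr ⟨_, _, _, ?_, ?_, ?_, rfl⟩ <;>
        exact fun h => absurd (hsome2 _ _ _ _ h).2 (by decide)
    · obtain ⟨⟨x, i⟩, hw, rfl⟩ := Finset.mem_image.mp hs
      refine Finset.card_eq_three.mpr ⟨_, _, _, ?_, ?_, ?_, rfl⟩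
      · simp
      · simp
      · exact fun h => hki i ((hsome2 _ _ _ _ h).2).symm
    · obtain ⟨⟨⟨a, b⟩, i⟩, hw, rfl⟩ := Finset.mem_image.mp hs
      rw [Finset.mem_product, hPdef, Finset.mem_filter] at hw
      have hab : a ≠ b := by
        intro h
        subst h
        exact lt_irrefl _ hw.1.2
      refine Finset.card_eq_three.mpr ⟨_, _, _, ?_, ?_, ?_, rfl⟩
      · exact fun h => hab (hsome2 _ _ _ _ h).1
      · exact fun h => hki i ((hsome2 _ _ _ _ h).2).symm
      · exact fun h => hki i ((hsome2 _ _ _ _ h).2).symm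
  · -- covering
    have hmemT : ∀ (x : Fin (2*t)) (i : Fin 3),
        some (x,i) ∈ ({some (x,0), some (x,1), some (x,2)} : Finset V) := by
      intro x i
      fin_cases i <;> simp
    have hB1mem : ∀ x : Fin (2*t), x.val < t →
        ({some (x,0), some (x,1), some (x,2)} : Finset V) ∈ S := by
      intro x hx
      exact Finset.mem_union_left _ (Finset.mem_union_left _
        (Finset.mem_image_of_mem _ (Finset.mem_filter.mpr ⟨Finset.mem_univ x, hx⟩)))
    have hBinfget : ∀ (x : Fin (2*t)), t ≤ x.val → ∀ i : Fin 3,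
        ∃ s ∈ S, none ∈ s ∧ some (x, i) ∈ s ∧
          ∀ y : Fin (2*t), y.val = x.val - t → some (y, i+1) ∈ s := by
      intro x hx i
      refine ⟨({none, some (x, i),
        some (⟨x.val - t, lt_of_le_of_lt (Nat.sub_le _ _) x.isLt⟩, i + 1)} : Finset V),
        ?_, by simp, by simp, ?_⟩
      · apply Finset.mem_union_left
        apply Finset.mem_union_right
        have hw : ((x, i) : Fin (2*t) × Fin 3) ∈
            ((Finset.univ : Finset (Fin (2*t))).filter (fun x => t ≤ x.val)) ×ˢ
              (Finset.univ : Finset (Fin 3)) :=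
          Finset.mem_product.mpr ⟨Finset.mem_filter.mpr ⟨Finset.mem_univ x, hx⟩, Finset.mem_univ i⟩
        exact Finset.mem_image_of_mem _ hw
      · intro y hy
        have hyy : y = ⟨x.val - t, lt_of_le_of_lt (Nat.sub_le _ _) x.isLt⟩ := Fin.ext hy
        rw [hyy]
        simp
    have hB2get : ∀ (x y : Fin (2*t)) (i : Fin 3), x ≠ y →
        ∃ s ∈ S, some (x,i) ∈ s ∧ some (y,i) ∈ s ∧ some (opvF t ht x y, i+1) ∈ s := by
      intro x y i hxy
      have hvne : x.val ≠ y.val := fun hv => hxy (Fin.ext hv)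
      rcases Nat.lt_or_ge x.val y.val with h | h
      · refine ⟨({some (x,i), some (y,i), some (opvF t ht x y, i+1)} : Finset V), ?_,
          by simp, by simp, by simp⟩
        apply Finset.mem_union_right
        have hw : (((x, y), i) : (Fin (2*t) × Fin (2*t)) × Fin 3) ∈
            P ×ˢ (Finset.univ : Finset (Fin 3)) :=
          Finset.mem_product.mpr ⟨Finset.mem_filter.mpr
            ⟨Finset.mem_product.mpr ⟨Finset.mem_univ _, Finset.mem_univ _⟩, h⟩,
            Finset.mem_univ i⟩
        exact Finset.mem_image_of_mem _ hw
      · have hlt : y.val < x.val := by omega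
        have hcomm := opvF_comm t ht y x
        refine ⟨({some (y,i), some (x,i), some (opvF t ht y x, i+1)} : Finset V), ?_,
          by simp, by simp, ?_⟩
        · apply Finset.mem_union_right
          have hw : (((y, x), i) : (Fin (2*t) × Fin (2*t)) × Fin 3) ∈
              P ×ˢ (Finset.univ : Finset (Fin 3)) :=
            Finset.mem_product.mpr ⟨Finset.mem_filter.mpr
              ⟨Finset.mem_product.mpr ⟨Finset.mem_univ _, Finset.mem_univ _⟩, hlt⟩,
              Finset.mem_univ i⟩
          exact Finset.mem_image_of_mem _ hw
        · simp only [Finset.mem_insert, Finset.mem_singleton]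
          right; right
          rw [hcomm]
    have hcross : ∀ (x y : Fin (2*t)) (i : Fin 3),
        ∃ s ∈ S, some (x,i) ∈ s ∧ some (y, i+1) ∈ s := by
      intro x y i
      obtain ⟨z, hz⟩ := opvF_solve t ht x y
      by_cases hzx : z = x
      · rw [hzx] at hz
        have hval := opvF_self_val t ht x
        rw [hz] at hval
        rcases Nat.lt_or_ge x.val t with h | h
        · rw [if_pos h] at hval
          have hyx : y = x := Fin.ext hval
          rw [hyx]
          exact ⟨_, hB1mem x h, hmemT x i, hmemT x (i+1)⟩
        · rw [if_neg (Nat.not_lt.mpr h)] at hval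
          obtain ⟨s, hsS, -, hxm, hym⟩ := hBinfget x h i
          exact ⟨s, hsS, hxm, hym y hval⟩
      · obtain ⟨s, hsS, hxm, -, hthird⟩ := hB2get x z i (fun hh => hzx hh.symm)
        rw [hz] at hthird
        exact ⟨s, hsS, hxm, hthird⟩
    have hinfty : ∀ (x : Fin (2*t)) (i : Fin 3), ∃ s ∈ S, none ∈ s ∧ some (x, i) ∈ s := by
      intro x i
      rcases Nat.lt_or_ge x.val t with h | h
      · have hx := x.isLt
        set x' : Fin (2*t) := ⟨x.val + t, by omega⟩ with hx'
        have hx'ge : t ≤ x'.val := by simp [hx']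
        obtain ⟨s, hsS, hnone, -, hym⟩ := hBinfget x' hx'ge (i-1)
        have hmem : some (x, (i-1)+1) ∈ s := hym x (by simp [hx'])
        rw [sub_add_cancel] at hmem
        exact ⟨s, hsS, hnone, hmem⟩
      · obtain ⟨s, hsS, hnone, hxm, -⟩ := hBinfget x h i
        exact ⟨s, hsS, hnone, hxm⟩
    rintro a b hab
    rcases a with _ | ⟨x, i⟩ <;> rcases b with _ | ⟨y, j⟩
    · exact absurd rfl hab
    · obtain ⟨s, hs, h1, h2⟩ := hinfty y j
      exact ⟨s, hs, h1, h2⟩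
    · obtain ⟨s, hs, h1, h2⟩ := hinfty x i
      exact ⟨s, hs, h2, h1⟩
    · by_cases hij : j = i
      · subst hij
        have hxy : x ≠ y := fun h => hab (by rw [h])
        obtain ⟨s, hs, h1, h2, -⟩ := hB2get x y j hxy
        exact ⟨s, hs, h1, h2⟩
      · have hfin : ∀ i j : Fin 3, j ≠ i → j = i + 1 ∨ i = j + 1 := by decide
        rcases hfin i j hij with h | h
        · subst h
          exact hcross x y i
        · obtain ⟨s, hs, h1, h2⟩ := hcross y x j
          rw [← h] at h2
          exact ⟨s, hs, h2, h1⟩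


/-- Bose construction: Steiner-type covering triple system for `m = 6t+3`. -/
lemma sts_case3 (t : ℕ) :
    ∃ S : Finset (Finset (ZMod (2*t+1) × Fin 3)),
      6 * S.card ≤ (6*t+3) * (6*t+3 - 1) ∧ (∀ s ∈ S, s.card = 3) ∧
      ∀ x y : ZMod (2*t+1) × Fin 3, x ≠ y → ∃ s ∈ S, x ∈ s ∧ y ∈ s := by
  haveI : NeZero (2*t+1) := ⟨by omega⟩
  set q := 2*t+1 with hqdef
  set c : ZMod q := (t : ZMod q) + 1 with hc
  have h2c : (2 : ZMod q) * c = 1 := by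
    have h0 : ((2*t+1 : ℕ) : ZMod q) = 0 := by
      rw [hqdef]; exact ZMod.natCast_self _
    push_cast at h0
    rw [hc]
    linear_combination h0
  set B1 : Finset (Finset (ZMod q × Fin 3)) :=
    (Finset.univ : Finset (ZMod q)).image
      (fun x => ({(x,0),(x,1),(x,2)} : Finset (ZMod q × Fin 3))) with hB1def
  set P : Finset (ZMod q × ZMod q) :=
    (Finset.univ ×ˢ Finset.univ).filter (fun p => p.1.val < p.2.val) with hPdef
  set B2 : Finset (Finset (ZMod q × Fin 3)) :=
    (P ×ˢ (Finset.univ : Finset (Fin 3))).image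
      (fun w => ({(w.1.1, w.2), (w.1.2, w.2), (c*(w.1.1+w.1.2), w.2+1)} :
        Finset (ZMod q × Fin 3))) with hB2def
  set S := B1 ∪ B2 with hSdef
  refine ⟨S, ?_, ?_, ?_⟩
  · -- counting
    have hq : Fintype.card (ZMod q) = q := ZMod.card q
    have h2P := two_mul_card_filter_lt (ZMod.val (n := q)) (ZMod.val_injective q)
    rw [hq] at h2P
    have h2P' : 2 * P.card = 2 * ((2*t+1)*t) := by
      rw [hPdef, h2P, hqdef]
      have h1 : 2*t+1-1 = 2*t := by omega
      rw [h1]; ring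
    have hB1c : B1.card ≤ 2*t+1 := by
      refine le_trans Finset.card_image_le ?_
      rw [Finset.card_univ, hq]
    have hB2c : B2.card ≤ P.card * 3 := by
      refine le_trans Finset.card_image_le ?_
      rw [Finset.card_product, Finset.card_univ, Fintype.card_fin]
    have hSc : S.card ≤ B1.card + B2.card := Finset.card_union_le _ _
    have hexp : (6*t+3) * (6*t+3-1) = 6*(2*t+1) + 18*((2*t+1)*t) := by
      have h1 : 6*t+3-1 = 6*t+2 := by omega
      rw [h1]; ring
    rw [hexp]
    set A := (2*t+1)*t with hA
    omega
  · -- card 3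
    intro s hs
    rw [hSdef, Finset.mem_union] at hs
    rcases hs with hs | hs
    · obtain ⟨x, -, rfl⟩ := Finset.mem_image.mp hs
      refine Finset.card_eq_three.mpr ⟨(x,0), (x,1), (x,2), ?_, ?_, ?_, rfl⟩ <;>
        simp [Prod.ext_iff]
    · obtain ⟨⟨⟨a, b⟩, i⟩, hw, rfl⟩ := Finset.mem_image.mp hs
      rw [Finset.mem_product, hPdef, Finset.mem_filter] at hw
      have hab : a ≠ b := by
        intro h
        subst h
        exact lt_irrefl _ hw.1.2
      have hi1 : ∀ k : Fin 3, k + 1 ≠ k := by decide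
      refine Finset.card_eq_three.mpr ⟨(a,i), (b,i), (c*(a+b), i+1), ?_, ?_, ?_, rfl⟩
      · simp only [Ne, Prod.mk.injEq, not_and]
        exact fun h => absurd h hab
      · simp only [Ne, Prod.mk.injEq, not_and]
        exact fun _ h => hi1 i h.symm
      · simp only [Ne, Prod.mk.injEq, not_and]
        exact fun _ h => hi1 i h.symm
  · -- covering
    have hmemB1 : ∀ (x : ZMod q) (i : Fin 3),
        (x, i) ∈ ({(x,0),(x,1),(x,2)} : Finset (ZMod q × Fin 3)) := by
      intro x i
      fin_cases i <;> simp
    have hB1mem : ∀ x : ZMod q, ({(x,0),(x,1),(x,2)} : Finset (ZMod q × Fin 3)) ∈ S :=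
      fun x => Finset.mem_union_left _ (Finset.mem_image_of_mem _ (Finset.mem_univ x))
    have hB2get : ∀ (x y : ZMod q) (i : Fin 3), x ≠ y →
        ∃ s ∈ S, (x,i) ∈ s ∧ (y,i) ∈ s ∧ (c*(x+y), i+1) ∈ s := by
      intro x y i hxy
      have hvne : x.val ≠ y.val := fun hv => hxy (ZMod.val_injective q hv)
      rcases Nat.lt_or_ge x.val y.val with h | h
      · refine ⟨({(x,i),(y,i),(c*(x+y),i+1)} : Finset (ZMod q × Fin 3)), ?_,
          by simp, by simp, by simp⟩
        apply Finset.mem_union_right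
        have hmem : (((x, y), i) : (ZMod q × ZMod q) × Fin 3) ∈ P ×ˢ (Finset.univ : Finset (Fin 3)) :=
          Finset.mem_product.mpr ⟨Finset.mem_filter.mpr
            ⟨Finset.mem_product.mpr ⟨Finset.mem_univ _, Finset.mem_univ _⟩, h⟩,
            Finset.mem_univ i⟩
        exact Finset.mem_image_of_mem _ hmem
      · have hlt : y.val < x.val := by omega
        have hcomm : c*(y+x) = c*(x+y) := by ring
        refine ⟨({(y,i),(x,i),(c*(y+x),i+1)} : Finset (ZMod q × Fin 3)), ?_,
          by simp, by simp, ?_⟩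
        · apply Finset.mem_union_right
          have hmem : (((y, x), i) : (ZMod q × ZMod q) × Fin 3) ∈ P ×ˢ (Finset.univ : Finset (Fin 3)) :=
            Finset.mem_product.mpr ⟨Finset.mem_filter.mpr
              ⟨Finset.mem_product.mpr ⟨Finset.mem_univ _, Finset.mem_univ _⟩, hlt⟩,
              Finset.mem_univ i⟩
          exact Finset.mem_image_of_mem _ hmem
        · simp only [Finset.mem_insert, Finset.mem_singleton]
          right; right
          rw [hcomm]
    have hcross : ∀ (x y : ZMod q) (i : Fin 3), ∃ s ∈ S, (x, i) ∈ s ∧ (y, i+1) ∈ s := by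
      intro x y i
      by_cases h : y = x
      · subst h
        exact ⟨_, hB1mem y, hmemB1 y i, hmemB1 y (i+1)⟩
      · set z := 2*y - x with hzdef
        have hz : c*(x+z) = y := by
          rw [hzdef]
          linear_combination y * h2c
        have hzx : z ≠ x := by
          intro hzz
          rw [hzdef] at hzz
          exact h (by linear_combination c*hzz + (x - y)*h2c)
        obtain ⟨s, hsS, hxmem, -, hthird⟩ := hB2get x z i (fun hh => hzx hh.symm)
        rw [hz] at hthird
        exact ⟨s, hsS, hxmem, hthird⟩
    rintro ⟨x, i⟩ ⟨y, j⟩ hne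
    by_cases hij : j = i
    · subst hij
      have hxy : x ≠ y := fun h => hne (by rw [h])
      obtain ⟨s, hs, h1, h2, -⟩ := hB2get x y j hxy
      exact ⟨s, hs, h1, h2⟩
    · have hfin : ∀ i j : Fin 3, j ≠ i → j = i + 1 ∨ i = j + 1 := by decide
      rcases hfin i j hij with h | h
      · subst h
        exact hcross x y i
      · obtain ⟨s, hs, h1, h2⟩ := hcross y x j
        rw [← h] at h2
        exact ⟨s, hs, h2, h1⟩

lemma sts_exists (m : ℕ) (hm : (m % 6 = 1 ∧ 7 ≤ m) ∨ m % 6 = 3) :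
    ∃ S : Finset (Finset (Fin m)), 6 * S.card ≤ m * (m - 1) ∧ (∀ s ∈ S, s.card = 3) ∧
      ∀ x y : Fin m, x ≠ y → ∃ s ∈ S, x ∈ s ∧ y ∈ s := by
  rcases hm with ⟨h1, h7⟩ | h3
  · obtain ⟨t, rfl⟩ : ∃ t, m = 6*t+1 := ⟨m/6, by omega⟩
    have ht : 1 ≤ t := by omega
    obtain ⟨S, hc, h3s, hcov⟩ := sts_case1 t ht
    have hcard : Fintype.card (Option (Fin (2*t) × Fin 3)) = Fintype.card (Fin (6*t+1)) := by
      rw [Fintype.card_option, Fintype.card_prod, Fintype.card_fin, Fintype.card_fin,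
        Fintype.card_fin]
      ring
    obtain ⟨S', hle, h3', hcov'⟩ := cover_transfer (Fintype.equivOfCardEq hcard) S h3s hcov
    exact ⟨S', by omega, h3', hcov'⟩
  · obtain ⟨t, rfl⟩ : ∃ t, m = 6*t+3 := ⟨m/6, by omega⟩
    haveI : NeZero (2*t+1) := ⟨by omega⟩
    obtain ⟨S, hc, h3s, hcov⟩ := sts_case3 t
    have hcard : Fintype.card (ZMod (2*t+1) × Fin 3) = Fintype.card (Fin (6*t+3)) := by
      rw [Fintype.card_prod, ZMod.card, Fintype.card_fin, Fintype.card_fin]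
      ring
    obtain ⟨S', hle, h3', hcov'⟩ := cover_transfer (Fintype.equivOfCardEq hcard) S h3s hcov
    exact ⟨S', by omega, h3', hcov'⟩

lemma lower_bound (n : ℕ) (D : Finset {A : Finset (Fin n) // A.card = 3})
    (hD : IsDominatingSet (tokenGraph (⊤ : SimpleGraph (Fin n)) 3) ↑D) :
    n^2 - 2*n ≤ 12 * D.card := by
  classical
  set Cov : Finset (Finset (Fin n)) := D.biUnion (fun d => d.1.powersetCard 2) with hCov
  have hCovCard : Cov.card ≤ 3 * D.card := by
    refine le_trans Finset.card_biUnion_le ?_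
    have h3 : ∀ d ∈ D, (d.1.powersetCard 2).card = 3 := by
      intro d _
      rw [Finset.card_powersetCard, d.2]
      decide
    refine le_trans (Finset.sum_le_sum (fun d hd => le_of_eq (h3 d hd))) ?_
    rw [Finset.sum_const, smul_eq_mul]
    omega
  have hCovSub : Cov ⊆ Finset.univ.powersetCard 2 := by
    intro p hp
    obtain ⟨d, -, hpd⟩ := Finset.mem_biUnion.mp hp
    rw [Finset.mem_powersetCard] at hpd ⊢
    exact ⟨Finset.subset_univ _, hpd.2⟩
  set U := Finset.univ.powersetCard 2 \ Cov with hU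
  have hU2 : ∀ p ∈ U, p.card = 2 := by
    intro p hp
    rw [hU, Finset.mem_sdiff, Finset.mem_powersetCard] at hp
    exact hp.1.2
  have hnotCov : ∀ {p : Finset (Fin n)}, p ∈ U → p ∉ Cov := by
    intro p hp
    rw [hU, Finset.mem_sdiff] at hp
    exact hp.2
  have htf : ∀ a b c : Fin n, a ≠ b → a ≠ c → b ≠ c →
      ({a,b} : Finset (Fin n)) ∈ U → ({a,c} : Finset (Fin n)) ∈ U →
      ({b,c} : Finset (Fin n)) ∈ U → False := by
    intro a b c hab hac hbc h1 h2 h3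
    have hT : ({a,b,c} : Finset (Fin n)).card = 3 :=
      Finset.card_eq_three.mpr ⟨a,b,c,hab,hac,hbc,rfl⟩
    have hpairCov : ∀ p : Finset (Fin n), p ⊆ ({a,b,c} : Finset (Fin n)) → p.card = 2 →
        p ∈ Cov → False := by
      intro p hsub hp2 hpCov
      obtain ⟨x, y, hxy, rfl⟩ := Finset.card_eq_two.mp hp2
      have hx : x ∈ ({a,b,c} : Finset (Fin n)) := hsub (by simp)
      have hy : y ∈ ({a,b,c} : Finset (Fin n)) := hsub (by simp)
      simp only [Finset.mem_insert, Finset.mem_singleton] at hx hy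
      rcases hx with rfl|rfl|rfl <;> rcases hy with rfl|rfl|rfl
      · exact hxy rfl
      · exact hnotCov h1 hpCov
      · exact hnotCov h2 hpCov
      · rw [Finset.pair_comm] at hpCov
        exact hnotCov h1 hpCov
      · exact hxy rfl
      · exact hnotCov h3 hpCov
      · rw [Finset.pair_comm] at hpCov
        exact hnotCov h2 hpCov
      · rw [Finset.pair_comm] at hpCov
        exact hnotCov h3 hpCov
      · exact hxy rfl
    rcases hD ⟨{a,b,c}, hT⟩ with hmem | ⟨u, huD, hadj⟩
    · have hABCov : ({a,b} : Finset (Fin n)) ∈ Cov := by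
        refine Finset.mem_biUnion.mpr ⟨⟨{a,b,c}, hT⟩, Finset.mem_coe.mp hmem, ?_⟩
        refine Finset.mem_powersetCard.mpr ⟨?_, Finset.card_pair hab⟩
        intro z hz
        simp only [Finset.mem_insert, Finset.mem_singleton] at hz ⊢
        tauto
      exact hpairCov {a,b} (by intro z hz; simp only [Finset.mem_insert,
        Finset.mem_singleton] at hz ⊢; tauto) (Finset.card_pair hab) hABCov
    · obtain ⟨p, q, hpq, hsd⟩ := hadj
      have hpqne : p ≠ q := hpq.ne
      have hint : (u.1 ∩ ({a,b,c} : Finset (Fin n))).card = 2 :=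
        shared_pair_of_symmDiff u.1 {a,b,c} u.2 hT hpqne hsd
      have hCovmem : u.1 ∩ ({a,b,c} : Finset (Fin n)) ∈ Cov :=
        Finset.mem_biUnion.mpr ⟨u, Finset.mem_coe.mp huD,
          Finset.mem_powersetCard.mpr ⟨Finset.inter_subset_left, hint⟩⟩
      exact hpairCov _ Finset.inter_subset_right hint hCovmem
  have hmantel := mantel_finset U hU2 htf
  rw [Fintype.card_fin] at hmantel
  have hUcard : U.card = (Finset.univ.powersetCard 2 : Finset (Finset (Fin n))).card - Cov.card :=
    Finset.card_sdiff_of_subset hCovSub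
  have hpairs : (Finset.univ.powersetCard 2 : Finset (Finset (Fin n))).card = Nat.choose n 2 := by
    rw [Finset.card_powersetCard, Finset.card_univ, Fintype.card_fin]
  have h2c := two_mul_choose_two n
  have hnn : 2*(n*(n-1)) + 2*n = 2*(n*n) := by
    rcases n with _ | k
    · simp
    · simp only [Nat.succ_sub_one]
      ring
  have hsq : n^2 = n*n := sq n
  omega

/-- If `n ≡ 2` or `6 (mod 12)`, then `γ(F₃(Kₙ)) = n²/12 - n/6`, i.e.
`12·γ(F₃(Kₙ)) = n² - 2n`. -/
theorem domination_three_token_complete_exact (n : ℕ) (hn : 6 ≤ n)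
    (hmod : n % 12 = 2 ∨ n % 12 = 6) :
    12 * dominationNumber (tokenGraph (⊤ : SimpleGraph (Fin n)) 3) = n ^ 2 - 2 * n := by
  classical
  obtain ⟨m, rfl⟩ : ∃ m, n = 2*m := ⟨n/2, by omega⟩
  set n := 2*m with hn2
  have hmod' : (m % 6 = 1 ∧ 7 ≤ m) ∨ m % 6 = 3 := by omega
  obtain ⟨S, hSc, hS3, hScov⟩ := sts_exists m hmod'
  set fA : Fin m → Fin n := fun i => ⟨i.val, by omega⟩ with hfA
  set fB : Fin m → Fin n := fun i => ⟨m + i.val, by omega⟩ with hfB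
  have hfAinj : Function.Injective fA := by
    intro a b h
    simp only [hfA] at h
    rw [Fin.mk.injEq] at h
    exact Fin.ext h
  have hfBinj : Function.Injective fB := by
    intro a b h
    apply Fin.ext
    have := congrArg Fin.val h
    simp only [hfB] at this
    omega
  set T : Finset (Finset (Fin n)) := S.image (Finset.image fA) ∪ S.image (Finset.image fB)
    with hTdef
  have hT3 : ∀ s ∈ T, s.card = 3 := by
    intro s hs
    rw [hTdef, Finset.mem_union] at hs
    rcases hs with hs | hs
    · obtain ⟨u, hu, rfl⟩ := Finset.mem_image.mp hs
      rw [Finset.card_image_of_injective u hfAinj]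
      exact hS3 u hu
    · obtain ⟨u, hu, rfl⟩ := Finset.mem_image.mp hs
      rw [Finset.card_image_of_injective u hfBinj]
      exact hS3 u hu
  set D : Finset {A : Finset (Fin n) // A.card = 3} := T.subtype (fun A => A.card = 3)
    with hDdef
  have hDcard : D.card ≤ 2 * S.card := by
    rw [hDdef, Finset.card_subtype]
    calc (T.filter fun A => A.card = 3).card ≤ T.card := Finset.card_filter_le _ _
      _ ≤ (S.image (Finset.image fA)).card + (S.image (Finset.image fB)).card :=
          Finset.card_union_le _ _
      _ ≤ S.card + S.card := add_le_add Finset.card_image_le Finset.card_image_le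
      _ = 2 * S.card := by ring
  have hdom : IsDominatingSet (tokenGraph (⊤ : SimpleGraph (Fin n)) 3) ↑D := by
    intro v
    obtain ⟨a, b, c, hab, hac, hbc, hTeq⟩ := Finset.card_eq_three.mp v.2
    have hav : a ∈ v.1 := by rw [hTeq]; simp
    have hbv : b ∈ v.1 := by rw [hTeq]; simp
    have hcv : c ∈ v.1 := by rw [hTeq]; simp
    have getS : ∀ x y : Fin n, x ≠ y → (x.val < m ↔ y.val < m) →
        ∃ s ∈ T, x ∈ s ∧ y ∈ s := by
      intro x y hxy hside
      by_cases hx : x.val < m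
      · have hy : y.val < m := hside.mp hx
        obtain ⟨s, hsS, hxs, hys⟩ := hScov ⟨x.val, hx⟩ ⟨y.val, hy⟩
          (by intro h; rw [Fin.mk.injEq] at h; exact hxy (Fin.ext h))
        refine ⟨s.image fA, Finset.mem_union_left _ (Finset.mem_image_of_mem _ hsS), ?_, ?_⟩
        · have hexact : fA ⟨x.val, hx⟩ = x := Fin.ext rfl
          exact hexact ▸ Finset.mem_image_of_mem fA hxs
        · have hexact : fA ⟨y.val, hy⟩ = y := Fin.ext rfl
          exact hexact ▸ Finset.mem_image_of_mem fA hys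
      · have hy : ¬ y.val < m := fun h => hx (hside.mpr h)
        have hxlt := x.isLt
        have hylt := y.isLt
        obtain ⟨s, hsS, hxs, hys⟩ := hScov ⟨x.val - m, by omega⟩ ⟨y.val - m, by omega⟩
          (by intro h; rw [Fin.mk.injEq] at h; exact hxy (Fin.ext (by omega)))
        refine ⟨s.image fB, Finset.mem_union_right _ (Finset.mem_image_of_mem _ hsS), ?_, ?_⟩
        · have hexact : fB ⟨x.val - m, by omega⟩ = x := Fin.ext (by simp [hfB]; omega)
          exact hexact ▸ Finset.mem_image_of_mem fB hxs
        · have hexact : fB ⟨y.val - m, by omega⟩ = y := Fin.ext (by simp [hfB]; omega)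
          exact hexact ▸ Finset.mem_image_of_mem fB hys
    obtain ⟨x, y, hxv, hyv, hxy, hside⟩ : ∃ x y : Fin n, x ∈ v.1 ∧ y ∈ v.1 ∧ x ≠ y ∧
        (x.val < m ↔ y.val < m) := by
      by_cases h1 : a.val < m <;> by_cases h2 : b.val < m <;> by_cases h3 : c.val < m
      · exact ⟨a, b, hav, hbv, hab, iff_of_true h1 h2⟩
      · exact ⟨a, b, hav, hbv, hab, iff_of_true h1 h2⟩
      · exact ⟨a, c, hav, hcv, hac, iff_of_true h1 h3⟩
      · exact ⟨b, c, hbv, hcv, hbc, iff_of_false h2 h3⟩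
      · exact ⟨b, c, hbv, hcv, hbc, iff_of_true h2 h3⟩
      · exact ⟨a, c, hav, hcv, hac, iff_of_false h1 h3⟩
      · exact ⟨a, b, hav, hbv, hab, iff_of_false h1 h2⟩
      · exact ⟨a, b, hav, hbv, hab, iff_of_false h1 h2⟩
    obtain ⟨s, hsT, hxs, hys⟩ := getS x y hxy hside
    have hs3 : s.card = 3 := hT3 s hsT
    by_cases hsv : s = v.1
    · left
      rw [Finset.mem_coe, hDdef, Finset.mem_subtype]
      exact hsv ▸ hsT
    · right
      obtain ⟨p, q, hpq, hsd⟩ :=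
        symmDiff_pair_of_shared s v.1 hs3 v.2 hsv hxy hxs hys hxv hyv
      refine ⟨⟨s, hs3⟩, ?_, ?_⟩
      · rw [Finset.mem_coe, hDdef, Finset.mem_subtype]
        exact hsT
      · exact ⟨p, q, by simpa using hpq, hsd⟩
  have hid : n^2 - 2*n = 4*(m*(m-1)) := by
    rcases m with _ | k
    · simp [hn2]
    · have e1 : ((2*(k+1)))^2 = 4*(k+1)*(k+1) := by ring
      have e2 : 4*((k+1)*k) + 4*(k+1) = 4*(k+1)*(k+1) := by ring
      simp only [hn2, Nat.succ_sub_one]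
      omega
  have hupper : dominationNumber (tokenGraph (⊤ : SimpleGraph (Fin n)) 3) ≤ D.card :=
    Nat.sInf_le ⟨D, hdom, rfl⟩
  have hne : {k : ℕ | ∃ D : Finset {A : Finset (Fin n) // A.card = 3},
      IsDominatingSet (tokenGraph (⊤ : SimpleGraph (Fin n)) 3) ↑D ∧ D.card = k}.Nonempty := by
    refine ⟨(Finset.univ : Finset {A : Finset (Fin n) // A.card = 3}).card,
      Finset.univ, ?_, rfl⟩
    intro v
    left
    simp
  obtain ⟨Dm, hDm, hDmcard⟩ := Nat.sInf_mem hne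
  have hgam : dominationNumber (tokenGraph (⊤ : SimpleGraph (Fin n)) 3)
      = sInf {k : ℕ | ∃ D : Finset {A : Finset (Fin n) // A.card = 3},
        IsDominatingSet (tokenGraph (⊤ : SimpleGraph (Fin n)) 3) ↑D ∧ D.card = k} := rfl
  rw [← hgam] at hDmcard
  have hlow := lower_bound n Dm hDm
  rw [hDmcard] at hlow
  have h12 : 12 * dominationNumber (tokenGraph (⊤ : SimpleGraph (Fin n)) 3) ≤ n^2 - 2*n := by
    rw [hid]
    calc 12 * dominationNumber (tokenGraph (⊤ : SimpleGraph (Fin n)) 3) ≤ 12 * D.card := by omega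
      _ ≤ 12 * (2 * S.card) := by omega
      _ = 4 * (6 * S.card) := by ring
      _ ≤ 4 * (m*(m-1)) := by omega
  omega
end
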